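/- arXiv:2301.00241 — 6 statements merged into one kernel-verified Lean document; each statement's English description precedes it below -/
import Mathlib

section
/- Let 𝒳 be a separable metrizable space with its Borel σ-algebra and let 𝕏 = (X_t)_{t≥1} be a stochastic process on 𝒳 that does NOT satisfy condition C1. Then there exist a sequence (B_i)_{i≥1} of pairwise disjoint measurable subsets of 𝒳 with ⋃_{i≥1} B_i = 𝒳 and a sequence (N_i)_{i≥1} of natural numbers such that, letting i_t denote the unique index i with X_t ∈ B_i, with probability strictly greater than zero it holds that limsup_{T→∞} (1/T) Σ_{t=1}^T 1[ |{t' < t : X_{t'} ∈ B_{i_t}}| < N_{i_t} ] > 0. -/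
open MeasureTheory Filter Topology

/-- Empirical limsup frequency of the set `A` along the sequence `x`:
`limsup_{T→∞} (1/T) ∑_{t<T} 1_A(x t)`. -/
noncomputable def freqIn {𝒳 : Type*} (x : ℕ → 𝒳) (A : Set 𝒳) : ℝ :=
  limsup (fun T : ℕ => (∑ t ∈ Finset.range T, A.indicator (fun _ => (1 : ℝ)) (x t)) / T) atTop

/-- Condition C1: for every non-increasing sequence of measurable sets with empty
intersection, the expected empirical limsup frequency tends to `0`. -/
def CondC1 {Ω 𝒳 : Type*} [MeasurableSpace Ω] [MeasurableSpace 𝒳]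
    (P : Measure Ω) (X : ℕ → Ω → 𝒳) : Prop :=
  ∀ A : ℕ → Set 𝒳, (∀ k, MeasurableSet (A k)) → Antitone A → (⋂ k, A k) = ∅ →
    Tendsto (fun k => ∫ ω, freqIn (fun t => X t ω) (A k) ∂P) atTop (𝓝 0)

namespace Aux0

lemma avgInd_nonneg {α : Type*} (s : Set α) (y : ℕ → α) (T : ℕ) :
    0 ≤ (∑ t ∈ Finset.range T, s.indicator (fun _ => (1 : ℝ)) (y t)) / T := by
  apply div_nonneg _ (by positivity)
  exact Finset.sum_nonneg fun t _ => Set.indicator_nonneg (fun _ _ => zero_le_one) _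

lemma avgInd_le_one {α : Type*} (s : Set α) (y : ℕ → α) (T : ℕ) :
    (∑ t ∈ Finset.range T, s.indicator (fun _ => (1 : ℝ)) (y t)) / T ≤ 1 := by
  rcases Nat.eq_zero_or_pos T with hT | hT
  · simp [hT]
  · rw [div_le_one (by exact_mod_cast hT)]
    calc ∑ t ∈ Finset.range T, s.indicator (fun _ => (1:ℝ)) (y t)
        ≤ ∑ _t ∈ Finset.range T, (1:ℝ) := by
          apply Finset.sum_le_sum
          intro t _
          by_cases hmem : y t ∈ s
          · rw [Set.indicator_of_mem hmem]
          · rw [Set.indicator_of_notMem hmem]; exact zero_le_one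
      _ = T := by simp

lemma avgInd_bdd {α : Type*} (s : Set α) (y : ℕ → α) :
    IsBoundedUnder (· ≤ ·) atTop
      (fun T : ℕ => (∑ t ∈ Finset.range T, s.indicator (fun _ => (1 : ℝ)) (y t)) / T) :=
  isBoundedUnder_of ⟨1, fun T => avgInd_le_one s y T⟩

lemma avgInd_cobdd {α : Type*} (s : Set α) (y : ℕ → α) :
    IsCoboundedUnder (· ≤ ·) atTop
      (fun T : ℕ => (∑ t ∈ Finset.range T, s.indicator (fun _ => (1 : ℝ)) (y t)) / T) :=
  isCoboundedUnder_le_of_le atTop (fun T => avgInd_nonneg s y T)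

lemma avgInd_limsup_nonneg {α : Type*} (s : Set α) (y : ℕ → α) :
    0 ≤ limsup (fun T : ℕ =>
      (∑ t ∈ Finset.range T, s.indicator (fun _ => (1 : ℝ)) (y t)) / T) atTop :=
  le_limsup_of_frequently_le
    ((Eventually.of_forall (fun T => avgInd_nonneg s y T)).frequently) (avgInd_bdd s y)

lemma avgInd_limsup_le_one {α : Type*} (s : Set α) (y : ℕ → α) :
    limsup (fun T : ℕ =>
      (∑ t ∈ Finset.range T, s.indicator (fun _ => (1 : ℝ)) (y t)) / T) atTop ≤ 1 :=
  limsup_le_of_le (avgInd_cobdd s y) (Eventually.of_forall (fun T => avgInd_le_one s y T))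

end Aux0

open Aux0 in
/-- Lemma 1 of the paper (first part): if a process does not satisfy C1, there is a
measurable partition `B` of `𝒳` and thresholds `N i` such that with positive probability,
the limsup frequency of times `t` whose cell has been visited fewer than `N i` times
before `t` is positive. -/
theorem statement0 {Ω 𝒳 : Type*} [MeasurableSpace Ω]
    [TopologicalSpace 𝒳] [TopologicalSpace.SeparableSpace 𝒳]
    [TopologicalSpace.MetrizableSpace 𝒳] [MeasurableSpace 𝒳] [BorelSpace 𝒳]
    (P : Measure Ω) [IsProbabilityMeasure P]
    (X : ℕ → Ω → 𝒳) (hX : ∀ t, Measurable (X t))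
    (h : ¬ CondC1 P X) :
    ∃ (B : ℕ → Set 𝒳) (N : ℕ → ℕ),
      (∀ i, MeasurableSet (B i)) ∧
      Pairwise (Function.onFun Disjoint B) ∧
      (⋃ i, B i) = Set.univ ∧
      0 < P {ω | 0 < limsup (fun T : ℕ =>
        (∑ t ∈ Finset.range T,
          ({s : ℕ | ∃ i, X s ω ∈ B i ∧
              ({t' | t' < s ∧ X t' ω ∈ B i}).ncard < N i}).indicator
            (fun _ => (1 : ℝ)) t) / T) atTop} := by
  classical
  unfold CondC1 at h
  push_neg at h
  obtain ⟨A, hAm, hAanti, hAempty, hnot⟩ := h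
  -- the partial empirical frequencies
  set f : ℕ → ℕ → Ω → ℝ := fun k T ω =>
    (∑ t ∈ Finset.range T, (A k).indicator (fun _ => (1 : ℝ)) (X t ω)) / T with hfdef
  have hf_nonneg : ∀ k T ω, 0 ≤ f k T ω := fun k T ω =>
    avgInd_nonneg (A k) (fun t => X t ω) T
  have hf_le_one : ∀ k T ω, f k T ω ≤ 1 := fun k T ω =>
    avgInd_le_one (A k) (fun t => X t ω) T
  have hf_meas : ∀ k T, Measurable (fun ω => f k T ω) := by
    intro k T
    apply Measurable.div_const
    exact Finset.measurable_sum _ (fun t _ =>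
      (measurable_const.indicator (hAm k)).comp (hX t))
  have hf_mono : ∀ (k k' : ℕ), k ≤ k' → ∀ T ω, f k' T ω ≤ f k T ω := by
    intro k k' hk T ω
    simp only [hfdef, div_eq_mul_inv]
    apply mul_le_mul_of_nonneg_right _ (by positivity)
    apply Finset.sum_le_sum
    intro t _
    exact Set.indicator_le_indicator_of_subset (hAanti hk) (fun _ => zero_le_one) _
  have hbdd : ∀ k ω, IsBoundedUnder (· ≤ ·) atTop (fun T => f k T ω) := fun k ω =>
    avgInd_bdd (A k) (fun t => X t ω)
  have hcobdd : ∀ k ω, IsCoboundedUnder (· ≤ ·) atTop (fun T => f k T ω) := fun k ω =>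
    avgInd_cobdd (A k) (fun t => X t ω)
  have hF0 : ∀ k ω, 0 ≤ limsup (fun T => f k T ω) atTop := fun k ω =>
    avgInd_limsup_nonneg (A k) (fun t => X t ω)
  have hF1 : ∀ k ω, limsup (fun T => f k T ω) atTop ≤ 1 := fun k ω =>
    avgInd_limsup_le_one (A k) (fun t => X t ω)
  have hFmeas : ∀ k, Measurable (fun ω => limsup (fun T => f k T ω) atTop) := fun k =>
    Measurable.limsup (fun T => hf_meas k T)
  have hFint : ∀ k, Integrable (fun ω => limsup (fun T => f k T ω) atTop) P := by
    intro k
    refine ⟨(hFmeas k).aestronglyMeasurable, ?_⟩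
    apply HasFiniteIntegral.of_bounded (C := 1)
    apply ae_of_all
    intro ω
    rw [Real.norm_eq_abs, abs_le]
    exact ⟨by linarith [hF0 k ω], hF1 k ω⟩
  have hInt_nonneg : ∀ k, 0 ≤ ∫ ω, limsup (fun T => f k T ω) atTop ∂P :=
    fun k => integral_nonneg (fun ω => hF0 k ω)
  -- extract ε > 0
  obtain ⟨ε, hε, hfreq⟩ :
      ∃ ε > 0, ∃ᶠ k in atTop, ε ≤ ∫ ω, limsup (fun T => f k T ω) atTop ∂P := by
    have h2 : ¬ Tendsto (fun k => ∫ ω, limsup (fun T => f k T ω) atTop ∂P) atTop (𝓝 0) := hnot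
    rw [Metric.tendsto_atTop] at h2
    push_neg at h2
    obtain ⟨ε, hε, hh⟩ := h2
    refine ⟨ε, hε, frequently_atTop.mpr ?_⟩
    intro a
    obtain ⟨n, hn, hd⟩ := hh a
    refine ⟨n, hn, ?_⟩
    rw [Real.dist_eq, sub_zero, abs_of_nonneg (hInt_nonneg n)] at hd
    exact hd
  -- the events E k and their intersection G
  set E : ℕ → Set Ω := fun k => {ω | ε / 2 ≤ limsup (fun T => f k T ω) atTop} with hEdef
  have hEmeas : ∀ k, MeasurableSet (E k) :=
    fun k => measurableSet_le measurable_const (hFmeas k)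
  have hEanti : Antitone E := by
    intro k k' hkk' ω hω
    have hω' : ε / 2 ≤ limsup (fun T => f k' T ω) atTop := hω
    show ε / 2 ≤ limsup (fun T => f k T ω) atTop
    exact le_trans hω' (limsup_le_limsup (Eventually.of_forall (fun T => hf_mono k k' hkk' T ω))
      (hcobdd k' ω) (hbdd k ω))
  have hMarkov : ∀ k, ε ≤ ∫ ω, limsup (fun T => f k T ω) atTop ∂P →
      ε / 2 ≤ (P (E k)).toReal := by
    intro k hk
    have hpt : ∀ ω, limsup (fun T => f k T ω) atTop
        ≤ ε / 2 + (E k).indicator (fun _ => (1 : ℝ)) ω := by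
      intro ω
      by_cases hω : ω ∈ E k
      · rw [Set.indicator_of_mem hω]
        linarith [hF1 k ω]
      · rw [Set.indicator_of_notMem hω]
        have hlt : limsup (fun T => f k T ω) atTop < ε / 2 :=
          lt_of_not_ge (show ¬ ε / 2 ≤ limsup (fun T => f k T ω) atTop from hω)
        linarith
    have hint2 : ∫ ω, (ε / 2 + (E k).indicator (fun _ => (1 : ℝ)) ω) ∂P
        = ε / 2 + (P (E k)).toReal := by
      rw [integral_add (integrable_const _) ((integrable_const (1 : ℝ)).indicator (hEmeas k))]
      rw [integral_const, integral_indicator_const (1 : ℝ) (hEmeas k)]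
      simp
      rfl
    have hgint : Integrable (fun ω => ε / 2 + (E k).indicator (fun _ => (1 : ℝ)) ω) P := by
      exact (integrable_const _).add ((integrable_const (1 : ℝ)).indicator (hEmeas k))
    have hmono := integral_mono (hFint k) hgint hpt
    rw [hint2] at hmono
    linarith
  have hEk : ∀ k, ENNReal.ofReal (ε / 2) ≤ P (E k) := by
    intro k
    obtain ⟨k', hk'ge, hk'⟩ := frequently_atTop.mp hfreq k
    calc ENNReal.ofReal (ε / 2) ≤ P (E k') :=
          ENNReal.ofReal_le_of_le_toReal (hMarkov k' hk')
      _ ≤ P (E k) := measure_mono (hEanti hk'ge)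
  set G := ⋂ k, E k with hGdef
  have hGmeas : MeasurableSet G := MeasurableSet.iInter hEmeas
  have hPG : ENNReal.ofReal (ε / 2) ≤ P G := by
    have ht := tendsto_measure_iInter_atTop (μ := P)
      (fun k => (hEmeas k).nullMeasurableSet) hEanti ⟨0, measure_ne_top P _⟩
    exact ge_of_tendsto' ht hEk
  have hc0 : 0 < P G := lt_of_lt_of_le (ENNReal.ofReal_pos.mpr (by linarith)) hPG
  have hGfreq : ∀ ω ∈ G, ∀ k, ∃ᶠ T in atTop, ε / 4 < f k T ω := by
    intro ω hω k
    have h1 : ε / 2 ≤ limsup (fun T => f k T ω) atTop := Set.mem_iInter.mp hω k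
    exact frequently_lt_of_lt_limsup (hcobdd k ω) (lt_of_lt_of_le (by linarith) h1)
  -- the partition B
  set B : ℕ → Set 𝒳 := fun i => if i = 0 then (A 1)ᶜ else A i \ A (i + 1) with hBdef
  have hBmeas : ∀ i, MeasurableSet (B i) := by
    intro i
    by_cases hi : i = 0
    · simp only [hBdef, hi, if_pos rfl]
      exact (hAm 1).compl
    · simp only [hBdef, if_neg hi]
      exact (hAm i).diff (hAm (i + 1))
  have hBsubA : ∀ i, i ≠ 0 → B i ⊆ A i := by
    intro i hi
    simp only [hBdef, if_neg hi]
    exact Set.diff_subset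
  have hBdisj : Pairwise (Function.onFun Disjoint B) := by
    have key : ∀ i j, i < j → Disjoint (B i) (B j) := by
      intro i j hij
      have hj1 : j ≠ 0 := by omega
      rcases Nat.eq_zero_or_pos i with hi | hi
      · subst hi
        rw [Set.disjoint_left]
        intro x hx hxj
        have hx1 : x ∈ A 1 := hAanti (by omega : 1 ≤ j) (hBsubA j hj1 hxj)
        simp only [hBdef, if_pos rfl, Set.mem_compl_iff] at hx
        exact hx hx1
      · have hi0 : i ≠ 0 := by omega
        rw [Set.disjoint_left]
        intro x hx hxj
        have hxAj : x ∈ A (i + 1) := hAanti (by omega : i + 1 ≤ j) (hBsubA j hj1 hxj)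
        simp only [hBdef, if_neg hi0, Set.mem_diff] at hx
        exact hx.2 hxAj
    intro i j hij
    rcases lt_or_gt_of_ne hij with hlt | hgt
    · exact key i j hlt
    · exact (key j i hgt).symm
  have hBfind : ∀ (k : ℕ) (x : 𝒳), 1 ≤ k → x ∈ A k → ∃ i, k ≤ i ∧ x ∈ B i := by
    intro k x hk hx
    have hex : ∃ j, x ∉ A j := by
      by_contra hcon
      push_neg at hcon
      have hmem : x ∈ ⋂ j, A j := Set.mem_iInter.mpr hcon
      rw [hAempty] at hmem
      exact hmem
    have hj : x ∉ A (Nat.find hex) := Nat.find_spec hex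
    have hjk : k < Nat.find hex := by
      by_contra hcon
      push_neg at hcon
      exact hj (hAanti hcon hx)
    have hj1 : x ∈ A (Nat.find hex - 1) := by
      have hmin := Nat.find_min hex (m := Nat.find hex - 1) (by omega)
      simpa using hmin
    refine ⟨Nat.find hex - 1, by omega, ?_⟩
    have hne : Nat.find hex - 1 ≠ 0 := by omega
    simp only [hBdef, if_neg hne, Set.mem_diff]
    refine ⟨hj1, ?_⟩
    have heq : Nat.find hex - 1 + 1 = Nat.find hex := by omega
    rw [heq]
    exact hj
  have hBunion : ⋃ i, B i = Set.univ := by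
    ext x
    simp only [Set.mem_iUnion, Set.mem_univ, iff_true]
    by_cases hx : x ∈ A 1
    · obtain ⟨i, _, hi⟩ := hBfind 1 x le_rfl hx
      exact ⟨i, hi⟩
    · refine ⟨0, ?_⟩
      simp only [hBdef, if_pos rfl, Set.mem_compl_iff]
      exact hx
  -- recursive construction of horizons m
  have hstep : ∀ (k a : ℕ), ∃ b, a < b ∧
      P (G \ {ω | ∃ T, a < T ∧ T ≤ b ∧ ε / 4 < f (k + 1) T ω}) ≤ P G * 2⁻¹ ^ (k + 2) := by
    intro k a
    set S : ℕ → Set Ω := fun b => {ω | ∃ T, a < T ∧ T ≤ b ∧ ε / 4 < f (k + 1) T ω} with hS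
    have hSmeas : ∀ b, MeasurableSet (S b) := by
      intro b
      have hrw : S b = ⋃ T ∈ Set.Ioc a b, {ω | ε / 4 < f (k + 1) T ω} := by
        ext ω
        simp only [hS, Set.mem_setOf_eq, Set.mem_iUnion, Set.mem_Ioc, exists_prop]
        constructor
        · rintro ⟨T, h1, h2, h3⟩; exact ⟨T, ⟨h1, h2⟩, h3⟩
        · rintro ⟨T, ⟨h1, h2⟩, h3⟩; exact ⟨T, h1, h2, h3⟩
      rw [hrw]
      exact MeasurableSet.biUnion (Set.to_countable _)
        (fun T _ => measurableSet_lt measurable_const (hf_meas (k + 1) T))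
    have hSmono : Monotone S := by
      intro b b' hbb' ω hω
      obtain ⟨T, h1, h2, h3⟩ := hω
      exact ⟨T, h1, le_trans h2 hbb', h3⟩
    have hmono : Antitone (fun b => G \ S b) := by
      intro b b' hbb'
      exact Set.diff_subset_diff_right (hSmono hbb')
    have hempty : ⋂ b, (G \ S b) = ∅ := by
      apply Set.eq_empty_iff_forall_notMem.mpr
      intro ω hω
      have hωG : ω ∈ G := (Set.mem_iInter.mp hω 0).1
      obtain ⟨T, hTa, hTf⟩ := frequently_atTop.mp (hGfreq ω hωG (k + 1)) (a + 1)
      exact (Set.mem_iInter.mp hω T).2 ⟨T, by omega, le_rfl, hTf⟩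
    have htend : Tendsto (fun b => P (G \ S b)) atTop (𝓝 0) := by
      have ht := tendsto_measure_iInter_atTop (μ := P)
        (fun b => (hGmeas.diff (hSmeas b)).nullMeasurableSet) hmono ⟨0, measure_ne_top P _⟩
      rw [hempty] at ht
      simpa [Function.comp_def] using ht
    have hpos : 0 < P G * 2⁻¹ ^ (k + 2) := by
      apply ENNReal.mul_pos hc0.ne'
      simp [pow_ne_zero]
    obtain ⟨b0, hb0⟩ := (htend.eventually_lt_const hpos).exists_forall_of_atTop
    exact ⟨max b0 (a + 1), by omega, le_of_lt (hb0 (max b0 (a + 1)) (le_max_left _ _))⟩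
  choose bf hbf1 hbf2 using hstep
  set m : ℕ → ℕ := fun k => Nat.rec 0 (fun k mk => bf k mk) k with hmdef
  have hm_succ : ∀ k, m (k + 1) = bf k (m k) := fun k => rfl
  have hm_lt : ∀ k, m k < m (k + 1) := by
    intro k
    rw [hm_succ]
    exact hbf1 k (m k)
  have hm_mono : StrictMono m := strictMono_nat_of_lt_succ hm_lt
  set S : ℕ → Set Ω := fun k =>
    {ω | ∃ T, m k < T ∧ T ≤ m (k + 1) ∧ ε / 4 < f (k + 1) T ω} with hSdef
  have hPS : ∀ k, P (G \ S k) ≤ P G * 2⁻¹ ^ (k + 2) := by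
    intro k
    have := hbf2 k (m k)
    rw [← hm_succ k] at this
    exact this
  set G' := G ∩ ⋂ k, S k with hG'def
  have hPG' : 0 < P G' := by
    have hsplit : P G ≤ P G' + P (G \ ⋂ k, S k) := by
      have hsub : G ⊆ G' ∪ (G \ ⋂ k, S k) := by
        intro ω hω
        by_cases h2 : ω ∈ ⋂ k, S k
        · exact Or.inl ⟨hω, h2⟩
        · exact Or.inr ⟨hω, h2⟩
      exact le_trans (measure_mono hsub) (measure_union_le _ _)
    have hdiff : P (G \ ⋂ k, S k) ≤ ∑' k, P (G \ S k) := by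
      have hsub : G \ ⋂ k, S k ⊆ ⋃ k, (G \ S k) := by
        intro ω hω
        obtain ⟨hωG, hωn⟩ := hω
        rw [Set.mem_iInter] at hωn
        push_neg at hωn
        obtain ⟨k, hk⟩ := hωn
        exact Set.mem_iUnion.mpr ⟨k, hωG, hk⟩
      exact le_trans (measure_mono hsub) (measure_iUnion_le _)
    have hsum : ∑' (k : ℕ), P (G \ S k) ≤ P G / 2 := by
      have hgeo : ∑' (k : ℕ), (2⁻¹ : ENNReal) ^ (k + 2) = 2⁻¹ := by
        have h1 : ∀ k : ℕ, (2⁻¹ : ENNReal) ^ (k + 2) = 2⁻¹ ^ k * 2⁻¹ ^ 2 := fun k => pow_add _ k 2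
        rw [tsum_congr h1, ENNReal.tsum_mul_right, ENNReal.tsum_geometric,
          ENNReal.one_sub_inv_two, inv_inv]
        rw [pow_two, ← mul_assoc, ENNReal.mul_inv_cancel (by norm_num) (by norm_num), one_mul]
      calc ∑' (k : ℕ), P (G \ S k) ≤ ∑' (k : ℕ), P G * 2⁻¹ ^ (k + 2) :=
            ENNReal.tsum_le_tsum hPS
        _ = P G * 2⁻¹ := by rw [ENNReal.tsum_mul_left, hgeo]
        _ = P G / 2 := by rw [ENNReal.div_eq_inv_mul, mul_comm]
    have hlt : P G / 2 < P G := ENNReal.half_lt_self hc0.ne' (measure_ne_top P G)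
    by_contra hcon
    push_neg at hcon
    have hG'0 : P G' = 0 := le_antisymm hcon zero_le
    rw [hG'0, zero_add] at hsplit
    exact absurd (le_trans hsplit (le_trans hdiff hsum)) (not_le.mpr hlt)
  -- conclusion
  refine ⟨B, fun i => m i + 1, hBmeas, hBdisj, hBunion, ?_⟩
  have hsubset : G' ⊆ {ω | 0 < limsup (fun T : ℕ =>
      (∑ t ∈ Finset.range T,
        ({s : ℕ | ∃ i, X s ω ∈ B i ∧
            ({t' | t' < s ∧ X t' ω ∈ B i}).ncard < m i + 1}).indicator
          (fun _ => (1 : ℝ)) t) / T) atTop} := by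
    intro ω hω
    obtain ⟨hωG, hωS⟩ := hω
    rw [Set.mem_iInter] at hωS
    set Nov : Set ℕ := {s : ℕ | ∃ i, X s ω ∈ B i ∧
        ({t' | t' < s ∧ X t' ω ∈ B i}).ncard < m i + 1} with hNov
    have hcompare : ∀ (k T : ℕ), T ≤ m (k + 1) →
        f (k + 1) T ω ≤ (∑ t ∈ Finset.range T, Nov.indicator (fun _ => (1 : ℝ)) t) / T := by
      intro k T hT
      simp only [hfdef, div_eq_mul_inv]
      apply mul_le_mul_of_nonneg_right _ (by positivity)
      apply Finset.sum_le_sum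
      intro t ht
      rw [Finset.mem_range] at ht
      by_cases hmem : X t ω ∈ A (k + 1)
      · obtain ⟨i, hik, hiB⟩ := hBfind (k + 1) (X t ω) (by omega) hmem
        have hncard : ({t' | t' < t ∧ X t' ω ∈ B i}).ncard < m i + 1 := by
          have hsub : {t' | t' < t ∧ X t' ω ∈ B i} ⊆ ↑(Finset.range t) := by
            intro t' ht'
            simp only [Finset.coe_range, Set.mem_Iio]
            exact ht'.1
          have hle : ({t' | t' < t ∧ X t' ω ∈ B i}).ncard ≤ t := by
            have := Set.ncard_le_ncard hsub (Finset.range t).finite_toSet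
            rwa [Set.ncard_coe_finset, Finset.card_range] at this
          have hmi : m (k + 1) ≤ m i := hm_mono.monotone hik
          omega
        have htNov : t ∈ Nov := ⟨i, hiB, hncard⟩
        rw [Set.indicator_of_mem hmem, Set.indicator_of_mem htNov]
      · rw [Set.indicator_of_notMem hmem]
        exact Set.indicator_nonneg (fun _ _ => zero_le_one) t
    have hfreqg : ∃ᶠ T in atTop,
        ε / 4 ≤ (∑ t ∈ Finset.range T, Nov.indicator (fun _ => (1 : ℝ)) t) / T := by
      rw [frequently_atTop]
      intro M
      obtain ⟨T, hT1, hT2, hT3⟩ := hωS M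
      refine ⟨T, ?_, ?_⟩
      · have : M ≤ m M := hm_mono.le_apply
        omega
      · exact le_trans (le_of_lt hT3) (hcompare M T hT2)
    have hlimsup : ε / 4 ≤ limsup (fun T : ℕ =>
        (∑ t ∈ Finset.range T, Nov.indicator (fun _ => (1 : ℝ)) t) / T) atTop :=
      le_limsup_of_frequently_le hfreqg (avgInd_bdd Nov (fun t => t))
    exact lt_of_lt_of_le (by linarith) hlimsup
  exact lt_of_lt_of_le hPG' (measure_mono hsubset)
end

section
/- Let 𝒳 be a separable metrizable space with its Borel σ-algebra and let 𝕏 = (X_t)_{t≥1} be a stochastic process on 𝒳 satisfying condition C1. Then for every sequence (B_i)_{i≥1} of pairwise disjoint measurable subsets of 𝒳 with ⋃_{i≥1} B_i = 𝒳 and every sequence (N_i)_{i≥1} of natural numbers, letting i_t denote the unique index i with X_t ∈ B_i, almost surely limsup_{T→∞} (1/T) Σ_{t=1}^T 1[ |{t' < t : X_{t'} ∈ B_{i_t}}| < N_{i_t} ] = 0. -/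
open MeasureTheory Filter Topology

/-- A set of naturals each of whose elements has fewer than `N` predecessors in the set
is finite. -/
lemma finite_of_ncard_pred_lt {S : Set ℕ} {N : ℕ}
    (h : ∀ t ∈ S, (S ∩ Set.Iio t).ncard < N) : S.Finite := by
  by_contra hinf
  have hinf' : S.Infinite := hinf
  obtain ⟨F, hFS, hFcard⟩ := hinf'.exists_subset_card_eq (N + 1)
  have hFne : F.Nonempty := by rw [← Finset.card_pos, hFcard]; omega
  set t := F.max' hFne with ht
  have htS : t ∈ S := hFS (F.max'_mem hFne)
  have hsub : ↑(F.erase t) ⊆ S ∩ Set.Iio t := by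
    intro x hx
    simp only [Finset.coe_erase, Set.mem_diff, Set.mem_singleton_iff] at hx
    exact ⟨hFS hx.1, lt_of_le_of_ne (F.le_max' x hx.1) hx.2⟩
  have hfin : (S ∩ Set.Iio t).Finite := (Set.finite_Iio t).subset Set.inter_subset_right
  have hle := Set.ncard_le_ncard hsub hfin
  rw [Set.ncard_coe_finset, Finset.card_erase_of_mem (F.max'_mem hFne), hFcard] at hle
  have := h t htS
  omega

/-- limsup comparison for `[0,1]`-valued sequences with a vanishing additive error. -/
lemma limsup_le_limsup_of_le_add_div {u v : ℕ → ℝ} (C : ℝ)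
    (hu0 : ∀ T, 0 ≤ u T) (hv0 : ∀ T, 0 ≤ v T) (hv1 : ∀ T, v T ≤ 1)
    (hle : ∀ T, u T ≤ v T + C / T) :
    limsup u atTop ≤ limsup v atTop := by
  have hvb : IsBoundedUnder (· ≤ ·) atTop v := isBoundedUnder_of ⟨1, hv1⟩
  have hvcob : IsCoboundedUnder (· ≤ ·) atTop v :=
    (isBoundedUnder_of ⟨0, hv0⟩ : IsBoundedUnder (· ≥ ·) atTop v).isCoboundedUnder_le
  have hub : IsBoundedUnder (· ≤ ·) atTop u :=
    isBoundedUnder_of ⟨1 + (|C| + 1), fun T => (hle T).trans (by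
      have h1 : C / T ≤ |C| + 1 := by
        rcases Nat.eq_zero_or_pos T with rfl | hT
        · simp; linarith [abs_nonneg C]
        · have hT1 : (1:ℝ) ≤ T := by exact_mod_cast hT
          calc C / T ≤ |C| / T := (div_le_div_iff_of_pos_right (by linarith : (0:ℝ) < T)).mpr (le_abs_self C)
            _ ≤ |C| := div_le_self (abs_nonneg C) hT1
            _ ≤ |C| + 1 := by linarith
      linarith [hv1 T])⟩
  have hucob : IsCoboundedUnder (· ≤ ·) atTop u :=
    (isBoundedUnder_of ⟨0, hu0⟩ : IsBoundedUnder (· ≥ ·) atTop u).isCoboundedUnder_le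
  by_contra hlt
  push_neg at hlt
  set ε := (limsup u atTop - limsup v atTop) / 2 with hε
  have hεpos : 0 < ε := by simp [hε]; linarith
  have hCto : Tendsto (fun T : ℕ => C / T) atTop (𝓝 0) := tendsto_const_div_atTop_nhds_zero_nat C
  have hev : ∀ᶠ T in atTop, u T ≤ v T + ε := by
    filter_upwards [hCto.eventually_le_const hεpos] with T hT
    linarith [hle T]
  have h1 : limsup u atTop ≤ limsup (fun T => v T + ε) atTop := by
    refine limsup_le_limsup hev hucob ?_
    exact isBoundedUnder_of ⟨1 + ε, fun T => by linarith [hv1 T]⟩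
  rw [limsup_add_const atTop v ε hvb hvcob] at h1
  simp only [hε] at h1
  linarith

/-- Lemma 1 of the paper (second part): if the process satisfies C1, then for every
measurable partition `B` of `𝒳` and every sequence of thresholds `N i`, almost surely the
limsup frequency of times `t` whose cell has been visited fewer than `N i` times before
`t` equals `0`. -/
theorem statement1 {Ω 𝒳 : Type*} [MeasurableSpace Ω]
    [TopologicalSpace 𝒳] [TopologicalSpace.SeparableSpace 𝒳]
    [TopologicalSpace.MetrizableSpace 𝒳] [MeasurableSpace 𝒳] [BorelSpace 𝒳]
    (P : Measure Ω) [IsProbabilityMeasure P]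
    (X : ℕ → Ω → 𝒳) (hX : ∀ t, Measurable (X t))
    (h : CondC1 P X) :
    ∀ (B : ℕ → Set 𝒳) (N : ℕ → ℕ),
      (∀ i, MeasurableSet (B i)) →
      Pairwise (Function.onFun Disjoint B) →
      (⋃ i, B i) = Set.univ →
      ∀ᵐ ω ∂P, limsup (fun T : ℕ =>
        (∑ t ∈ Finset.range T,
          ({s : ℕ | ∃ i, X s ω ∈ B i ∧
              ({t' | t' < s ∧ X t' ω ∈ B i}).ncard < N i}).indicator
            (fun _ => (1 : ℝ)) t) / T) atTop = 0 := by
  classical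
  intro B N hBm hBd hBc
  -- the tail sets
  set A : ℕ → Set 𝒳 := fun k => (⋃ i ∈ Finset.range k, B i)ᶜ with hA
  have hAm : ∀ k, MeasurableSet (A k) :=
    fun k => (MeasurableSet.biUnion (Finset.range k).countable_toSet fun i _ => hBm i).compl
  have hAanti : Antitone A := by
    intro k l hkl
    refine Set.compl_subset_compl.2 (Set.iUnion₂_subset fun i hi => ?_)
    exact Set.subset_iUnion₂ (s := fun i _ => B i) i
      (Finset.mem_range.2 (lt_of_lt_of_le (Finset.mem_range.1 hi) hkl))
  have hAinter : (⋂ k, A k) = ∅ := by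
    ext x
    simp only [Set.mem_iInter, Set.mem_empty_iff_false, iff_false, not_forall]
    have hx : x ∈ ⋃ i, B i := hBc ▸ Set.mem_univ x
    obtain ⟨i, hi⟩ := Set.mem_iUnion.1 hx
    refine ⟨i + 1, ?_⟩
    simp only [hA, Set.mem_compl_iff, not_not, Set.mem_iUnion]
    exact ⟨i, Finset.mem_range.2 (Nat.lt_succ_self i), hi⟩
  -- the averages and their limsups
  set u : ℕ → ℕ → Ω → ℝ :=
    fun k T ω => (∑ t ∈ Finset.range T, (A k).indicator (fun _ => (1:ℝ)) (X t ω)) / T with hu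
  have hind01 : ∀ (s : Set 𝒳) (x : 𝒳),
      0 ≤ s.indicator (fun _ => (1:ℝ)) x ∧ s.indicator (fun _ => (1:ℝ)) x ≤ 1 := by
    intro s x
    constructor
    · exact Set.indicator_nonneg (fun _ _ => zero_le_one) x
    · exact Set.indicator_le_self' (fun _ _ => zero_le_one) x |>.trans le_rfl
  have hu0 : ∀ k T ω, 0 ≤ u k T ω := by
    intro k T ω
    exact div_nonneg (Finset.sum_nonneg fun t _ => (hind01 _ _).1) (Nat.cast_nonneg T)
  have hu1 : ∀ k T ω, u k T ω ≤ 1 := by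
    intro k T ω
    rcases Nat.eq_zero_or_pos T with rfl | hT
    · simp [hu]
    · rw [hu, div_le_one (by exact_mod_cast hT)]
      calc (∑ t ∈ Finset.range T, (A k).indicator (fun _ => (1:ℝ)) (X t ω))
          ≤ ∑ t ∈ Finset.range T, 1 := Finset.sum_le_sum fun t _ => (hind01 _ _).2
        _ = (T : ℝ) := by simp
  set f : ℕ → Ω → ℝ := fun k ω => freqIn (fun t => X t ω) (A k) with hf
  have hfmeas : ∀ k, Measurable (f k) := by
    intro k
    apply Measurable.limsup
    intro T
    apply Measurable.div_const
    exact Finset.measurable_sum _ fun t _ =>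
      (measurable_const.indicator (hAm k)).comp (hX t)
  have hf0 : ∀ k ω, 0 ≤ f k ω := by
    intro k ω
    exact le_limsup_of_frequently_le (Frequently.of_forall fun T => hu0 k T ω)
      (isBoundedUnder_of ⟨1, fun T => hu1 k T ω⟩)
  have hf1 : ∀ k ω, f k ω ≤ 1 := by
    intro k ω
    refine limsup_le_of_le ?_ (Eventually.of_forall fun T => hu1 k T ω)
    exact (isBoundedUnder_of ⟨0, fun T => hu0 k T ω⟩ :
      IsBoundedUnder (· ≥ ·) atTop _).isCoboundedUnder_le
  have hfanti : ∀ ω, Antitone fun k => f k ω := by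
    intro ω k l hkl
    refine limsup_le_limsup (Eventually.of_forall fun T => ?_)
      ((isBoundedUnder_of ⟨0, fun T => hu0 l T ω⟩ :
        IsBoundedUnder (· ≥ ·) atTop _).isCoboundedUnder_le)
      (isBoundedUnder_of ⟨1, fun T => hu1 k T ω⟩)
    refine div_le_div_of_nonneg_right (Finset.sum_le_sum fun t _ => ?_) (Nat.cast_nonneg T)
    exact Set.indicator_le_indicator_of_subset (hAanti hkl) (fun _ => zero_le_one) _
  -- integrability
  have hfint : ∀ k, Integrable (f k) P := by
    intro k
    refine Integrable.mono' (integrable_const (1:ℝ)) (hfmeas k).aestronglyMeasurable ?_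
    exact Eventually.of_forall fun ω => by
      rw [Real.norm_eq_abs, abs_of_nonneg (hf0 k ω)]; exact hf1 k ω
  -- the pointwise infimum
  set g : Ω → ℝ := fun ω => ⨅ k, f k ω with hg
  have hbdd : ∀ ω, BddBelow (Set.range fun k => f k ω) :=
    fun ω => ⟨0, Set.forall_mem_range.2 fun k => hf0 k ω⟩
  have hg0 : ∀ ω, 0 ≤ g ω := fun ω => le_ciInf fun k => hf0 k ω
  have hgle : ∀ k ω, g ω ≤ f k ω := fun k ω => ciInf_le (hbdd ω) k
  have hgmeas : Measurable g := Measurable.iInf hfmeas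
  have hgint : Integrable g P := by
    refine Integrable.mono' (integrable_const (1:ℝ)) hgmeas.aestronglyMeasurable ?_
    exact Eventually.of_forall fun ω => by
      rw [Real.norm_eq_abs, abs_of_nonneg (hg0 ω)]
      exact (hgle 0 ω).trans (hf1 0 ω)
  have htend := h A hAm hAanti hAinter
  have hgzero : ∫ ω, g ω ∂P = 0 := by
    refine le_antisymm ?_ (integral_nonneg hg0)
    refine ge_of_tendsto htend (Eventually.of_forall fun k => ?_)
    exact integral_mono hgint (hfint k) fun ω => hgle k ω
  have hgae : ∀ᵐ ω ∂P, g ω = 0 := by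
    have := (integral_eq_zero_iff_of_nonneg_ae (Eventually.of_forall hg0) hgint).1 hgzero
    filter_upwards [this] with ω hω
    simpa using hω
  -- the a.e. conclusion
  filter_upwards [hgae] with ω hgω
  set S : Set ℕ := {s : ℕ | ∃ i, X s ω ∈ B i ∧
      ({t' | t' < s ∧ X t' ω ∈ B i}).ncard < N i} with hS
  set w : ℕ → ℝ :=
    fun T => (∑ t ∈ Finset.range T, S.indicator (fun _ => (1:ℝ)) t) / T with hw
  have hw0 : ∀ T, 0 ≤ w T :=
    fun T => div_nonneg (Finset.sum_nonneg fun t _ =>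
      Set.indicator_nonneg (fun _ _ => zero_le_one) t) (Nat.cast_nonneg T)
  -- key: limsup w ≤ f k ω for every k
  have hkey : ∀ k, limsup w atTop ≤ f k ω := by
    intro k
    -- the sets of "early visits" to each cell
    set V : ℕ → Set ℕ :=
      fun j => {s : ℕ | X s ω ∈ B j ∧ ({t' | t' < s ∧ X t' ω ∈ B j}).ncard < N j} with hV
    have hVfin : ∀ j, (V j).Finite := by
      intro j
      refine finite_of_ncard_pred_lt (N := N j) fun t ht => ?_
      have hsub : V j ∩ Set.Iio t ⊆ {t' | t' < t ∧ X t' ω ∈ B j} :=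
        fun x hx => ⟨hx.2, hx.1.1⟩
      have hfin : ({t' | t' < t ∧ X t' ω ∈ B j} : Set ℕ).Finite :=
        (Set.finite_Iio t).subset fun x hx => hx.1
      exact lt_of_le_of_lt (Set.ncard_le_ncard hsub hfin) ht.2
    set E : Set ℕ := ⋃ j ∈ Finset.range k, V j with hE
    have hEfin : E.Finite := Set.Finite.biUnion (Finset.range k).finite_toSet fun j _ => hVfin j
    set C : ℝ := (hEfin.toFinset.card : ℝ) with hC
    -- termwise bound
    have hterm : ∀ t, S.indicator (fun _ => (1:ℝ)) t ≤
        (A k).indicator (fun _ => (1:ℝ)) (X t ω) + E.indicator (fun _ => (1:ℝ)) t := by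
      intro t
      by_cases htS : t ∈ S
      · rw [Set.indicator_of_mem htS]
        obtain ⟨i, hiB, hiN⟩ := htS
        by_cases htA : X t ω ∈ A k
        · rw [Set.indicator_of_mem htA]
          linarith [Set.indicator_nonneg (s := E) (f := fun _ => (1:ℝ))
            (fun _ _ => zero_le_one) t]
        · have hmem : X t ω ∈ ⋃ j ∈ Finset.range k, B j := by
            simpa [hA] using htA
          obtain ⟨j, hjk, hjB⟩ := Set.mem_iUnion₂.1 hmem
          have hij : i = j := by
            by_contra hne
            exact Set.disjoint_left.1 (hBd hne) hiB hjB
          have htE : t ∈ E := Set.mem_iUnion₂.2 ⟨j, hjk, ⟨hjB, hij ▸ hiN⟩⟩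
          rw [Set.indicator_of_mem htE]
          linarith [Set.indicator_nonneg (s := A k) (f := fun _ => (1:ℝ))
            (fun _ _ => zero_le_one) (X t ω)]
      · rw [Set.indicator_of_notMem htS]
        have h1 := Set.indicator_nonneg (s := A k) (f := fun _ => (1:ℝ))
          (fun _ _ => zero_le_one) (X t ω)
        have h2 := Set.indicator_nonneg (s := E) (f := fun _ => (1:ℝ))
          (fun _ _ => zero_le_one) t
        linarith
    -- sum bound
    have hsum : ∀ T, (∑ t ∈ Finset.range T, S.indicator (fun _ => (1:ℝ)) t) ≤
        (∑ t ∈ Finset.range T, (A k).indicator (fun _ => (1:ℝ)) (X t ω)) + C := by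
      intro T
      have h1 : (∑ t ∈ Finset.range T, S.indicator (fun _ => (1:ℝ)) t) ≤
          ∑ t ∈ Finset.range T, ((A k).indicator (fun _ => (1:ℝ)) (X t ω) +
            E.indicator (fun _ => (1:ℝ)) t) := Finset.sum_le_sum fun t _ => hterm t
      rw [Finset.sum_add_distrib] at h1
      refine h1.trans (add_le_add (le_refl _) ?_)
      rw [Finset.sum_indicator_eq_sum_filter]
      have hss : (Finset.range T).filter (· ∈ E) ⊆ hEfin.toFinset := by
        intro x hx
        rw [Set.Finite.mem_toFinset]
        exact (Finset.mem_filter.1 hx).2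
      calc (∑ _t ∈ (Finset.range T).filter (· ∈ E), (1:ℝ))
          = ((Finset.range T).filter (· ∈ E)).card := by simp
        _ ≤ C := by exact_mod_cast Nat.cast_le.2 (Finset.card_le_card hss)
    have hdiv : ∀ T, w T ≤ u k T ω + C / T := by
      intro T
      rcases Nat.eq_zero_or_pos T with rfl | hT
      · simp [hw, hu]
      · have hTpos : (0:ℝ) < T := by exact_mod_cast hT
        rw [hw, hu]
        calc (∑ t ∈ Finset.range T, S.indicator (fun _ => (1:ℝ)) t) / T
            ≤ ((∑ t ∈ Finset.range T, (A k).indicator (fun _ => (1:ℝ)) (X t ω)) + C) / T :=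
              div_le_div_of_nonneg_right (hsum T) (le_of_lt hTpos)
          _ = _ := by rw [add_div]
    exact limsup_le_limsup_of_le_add_div C hw0 (fun T => hu0 k T ω) (fun T => hu1 k T ω) hdiv
  have hle0 : limsup w atTop ≤ 0 := by
    have : limsup w atTop ≤ g ω := le_ciInf hkey
    rwa [hgω] at this
  have hge0 : 0 ≤ limsup w atTop :=
    le_limsup_of_frequently_le (Frequently.of_forall hw0)
      (isBoundedUnder_of ⟨1, fun T => ?_⟩)
  · exact le_antisymm hle0 hge0
  -- w T ≤ 1
  rcases Nat.eq_zero_or_pos T with rfl | hT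
  · simp [hw]
  · rw [hw, div_le_one (by exact_mod_cast hT)]
    calc (∑ t ∈ Finset.range T, S.indicator (fun _ => (1:ℝ)) t)
        ≤ ∑ t ∈ Finset.range T, 1 :=
          Finset.sum_le_sum fun t _ => Set.indicator_le_self' (fun _ _ => zero_le_one) t
      _ = (T : ℝ) := by simp
end

section
/- Let 𝒳 be a separable metrizable space with its Borel σ-algebra and let 𝕏 = (X_t)_{t≥1} be a stochastic process on 𝒳. For M ≥ 1 define the random set of times 𝒯^{≤M} = {t ≥ 1 : |{t' ≤ t : X_{t'} = X_t}| ≤ M}. Then the following are equivalent: (1) 𝕏 satisfies condition C2; (2) the extended process (X_t)_{t∈𝒯^{≤1}} satisfies the extended condition C1; (3) for every M ≥ 1, the extended process (X_t)_{t∈𝒯^{≤M}} satisfies the extended condition C1. -/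
set_option linter.unusedSectionVars false


open MeasureTheory Filter Topology

/-- Condition C2: for every sequence of pairwise disjoint measurable sets, almost surely
the number of sets visited up to time `T` is `o(T)`. -/
def CondC2 {Ω 𝒳 : Type*} [MeasurableSpace Ω] [MeasurableSpace 𝒳]
    (P : Measure Ω) (X : ℕ → Ω → 𝒳) : Prop :=
  ∀ A : ℕ → Set 𝒳, (∀ k, MeasurableSet (A k)) → Pairwise (Function.onFun Disjoint A) →
    ∀ᵐ ω ∂P, Tendsto
      (fun T : ℕ => (({k | ∃ t < T, X t ω ∈ A k}).ncard : ℝ) / T) atTop (𝓝 0)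

/-- Extended condition C1 for an extended process `(X_t)_{t ∈ 𝒯}` on a (possibly random)
set of times `𝒯`: for every non-increasing sequence of measurable sets with empty
intersection, the expected limsup frequency (over times in `𝒯`) tends to `0`. -/
def ExtCondC1 {Ω 𝒳 : Type*} [MeasurableSpace Ω] [MeasurableSpace 𝒳]
    (P : Measure Ω) (X : ℕ → Ω → 𝒳) (𝒯 : Ω → Set ℕ) : Prop :=
  ∀ A : ℕ → Set 𝒳, (∀ k, MeasurableSet (A k)) → Antitone A → (⋂ k, A k) = ∅ →
    Tendsto (fun k => ∫ ω, limsup (fun T : ℕ =>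
      (∑ t ∈ Finset.range T,
        (𝒯 ω ∩ {t' | X t' ω ∈ A k}).indicator (fun _ => (1 : ℝ)) t) / T) atTop ∂P)
      atTop (𝓝 0)


namespace Stmt2Aux

/-! ### limsup helpers for `[0,1]`-valued sequences -/

lemma bdd_above01 {u : ℕ → ℝ} (h1 : ∀ n, u n ≤ 1) :
    IsBoundedUnder (· ≤ ·) atTop u := ⟨1, Filter.eventually_map.2 (Eventually.of_forall h1)⟩

lemma cobdd01 {u : ℕ → ℝ} (h0 : ∀ n, 0 ≤ u n) :
    IsCoboundedUnder (· ≤ ·) atTop u :=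
  IsBoundedUnder.isCoboundedUnder_le ⟨0, Filter.eventually_map.2 (Eventually.of_forall h0)⟩

lemma limsup_nonneg01 {u : ℕ → ℝ} (h0 : ∀ n, 0 ≤ u n) (h1 : ∀ n, u n ≤ 1) :
    0 ≤ limsup u atTop :=
  le_limsup_of_frequently_le (Frequently.of_forall h0) (bdd_above01 h1)

lemma limsup_le_one01 {u : ℕ → ℝ} (h0 : ∀ n, 0 ≤ u n) (h1 : ∀ n, u n ≤ 1) :
    limsup u atTop ≤ 1 :=
  limsup_le_of_le (cobdd01 h0) (Eventually.of_forall h1)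

lemma limsup_mono01 {u v : ℕ → ℝ} (hu0 : ∀ n, 0 ≤ u n) (hv1 : ∀ n, v n ≤ 1)
    (h : ∀ n, u n ≤ v n) : limsup u atTop ≤ limsup v atTop :=
  limsup_le_limsup (Eventually.of_forall h) (cobdd01 hu0) (bdd_above01 hv1)

/-- From `ε ≤ limsup u` get arbitrarily late times with `u T ≥ ε/2`. -/
lemma exists_gt_of_le_limsup {u : ℕ → ℝ} (h0 : ∀ n, 0 ≤ u n) {ε : ℝ} (hε : 0 < ε)
    (h : ε ≤ limsup u atTop) (N : ℕ) : ∃ T, N < T ∧ ε / 2 ≤ u T := by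
  by_contra hcon
  push_neg at hcon
  have : limsup u atTop ≤ ε / 2 :=
    limsup_le_of_le (cobdd01 h0) (by
      filter_upwards [eventually_gt_atTop N] with T hT
      exact le_of_lt (hcon T hT))
  linarith

end Stmt2Aux

namespace Stmt2Aux

section Partition
variable {𝒳 : Type*} [MetricSpace 𝒳] [TopologicalSpace.SeparableSpace 𝒳] [Nonempty 𝒳]

/-- Cells of a countable partition of a separable metric space at scale `1/(r+1)`. -/
def cell (r c : ℕ) : Set 𝒳 :=
  Metric.ball (TopologicalSpace.denseSeq 𝒳 c) (1 / (2 * (r + 1))) \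
    ⋃ c' < c, Metric.ball (TopologicalSpace.denseSeq 𝒳 c') (1 / (2 * (r + 1)))

lemma cell_exists (r : ℕ) (x : 𝒳) :
    ∃ c, dist x (TopologicalSpace.denseSeq 𝒳 c) < 1 / (2 * (r + 1)) := by
  have hd : DenseRange (TopologicalSpace.denseSeq 𝒳) := TopologicalSpace.denseRange_denseSeq 𝒳
  have := (Metric.denseRange_iff).1 hd x (1 / (2 * (r + 1))) (by positivity)
  exact this

/-- Index of the cell containing `x`. -/
noncomputable def cellIdx (r : ℕ) (x : 𝒳) : ℕ := Nat.find (cell_exists r x)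

lemma mem_cell_cellIdx (r : ℕ) (x : 𝒳) : x ∈ (cell r (cellIdx r x) : Set 𝒳) := by
  constructor
  · exact Metric.mem_ball.2 (Nat.find_spec (cell_exists r x))
  · intro hx
    simp only [Set.mem_iUnion] at hx
    obtain ⟨c', hc', hball⟩ := hx
    exact Nat.find_min (cell_exists r x) hc' (Metric.mem_ball.1 hball)

lemma cell_disjoint {r c c' : ℕ} (h : c ≠ c') : Disjoint (cell r c : Set 𝒳) (cell r c') := by
  rcases h.lt_or_gt with hlt | hlt
  · refine Set.disjoint_left.2 fun x hx hx' => ?_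
    exact hx'.2 (Set.mem_iUnion.2 ⟨c, Set.mem_iUnion.2 ⟨hlt, hx.1⟩⟩)
  · refine Set.disjoint_left.2 fun x hx hx' => ?_
    exact hx.2 (Set.mem_iUnion.2 ⟨c', Set.mem_iUnion.2 ⟨hlt, hx'.1⟩⟩)

lemma cell_dist {r c : ℕ} {x y : 𝒳} (hx : x ∈ (cell r c : Set 𝒳)) (hy : y ∈ (cell r c : Set 𝒳)) :
    dist x y ≤ 1 / (r + 1) := by
  have h1 := Metric.mem_ball.1 hx.1
  have h2 := Metric.mem_ball.1 hy.1
  have := dist_triangle x (TopologicalSpace.denseSeq 𝒳 c) y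
  rw [dist_comm (TopologicalSpace.denseSeq 𝒳 c) y] at this
  have hr : (0:ℝ) < (r:ℝ) + 1 := by positivity
  have : dist x y < 1 / (2 * (r + 1)) + 1 / (2 * (r + 1)) := by linarith
  have heq : 1 / (2 * ((r:ℝ) + 1)) + 1 / (2 * (r + 1)) = 1 / (r + 1) := by
    rw [← add_div, mul_comm]
    rw [div_eq_div_iff (by positivity) (by positivity)]
    ring
  linarith [heq ▸ this]

lemma cell_measurableSet [MeasurableSpace 𝒳] [BorelSpace 𝒳] (r c : ℕ) :
    MeasurableSet (cell r c : Set 𝒳) :=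
  (Metric.isOpen_ball.measurableSet).diff
    (MeasurableSet.biUnion (Set.to_countable _) fun _ _ => Metric.isOpen_ball.measurableSet)

end Partition

end Stmt2Aux

namespace Stmt2Aux

variable {Ω 𝒳 : Type*} [MeasurableSpace Ω] [MeasurableSpace 𝒳]

/-- The set of times which are duplicates of index at most `M`. -/
def TT (X : ℕ → Ω → 𝒳) (M : ℕ) : Ω → Set ℕ :=
  fun ω => {t | ({t' | t' ≤ t ∧ X t' ω = X t ω}).ncard ≤ M}

/-- Number of times `t < T` in `𝒯^{≤M}` with `X t ω ∈ A`. -/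
noncomputable def cnt (X : ℕ → Ω → 𝒳) (M : ℕ) (A : Set 𝒳) (T : ℕ) (ω : Ω) : Finset ℕ :=
  @Finset.filter _ (fun t => t ∈ TT X M ω ∧ X t ω ∈ A) (Classical.decPred _) (Finset.range T)

lemma mem_cnt {X : ℕ → Ω → 𝒳} {M : ℕ} {A : Set 𝒳} {T : ℕ} {ω : Ω} {t : ℕ} :
    t ∈ cnt X M A T ω ↔ t < T ∧ (t ∈ TT X M ω ∧ X t ω ∈ A) := by
  unfold cnt
  exact (@Finset.mem_filter _ _ (Classical.decPred _) _ _).trans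
    (and_congr_left' Finset.mem_range)

lemma ncard_dup (X : ℕ → Ω → 𝒳) (ω : Ω) (t : ℕ) :
    ({t' | t' ≤ t ∧ X t' ω = X t ω}).ncard
      = (@Finset.filter _ (fun t' => X t' ω = X t ω) (Classical.decPred _)
          (Finset.range (t+1))).card := by
  classical
  rw [← Set.ncard_coe_finset]
  congr 1
  ext t'
  simp [Nat.lt_succ_iff]

/-- The `𝒯^{≤M}`-frequency of `A` among the first `T` times. -/
noncomputable def ff (X : ℕ → Ω → 𝒳) (M : ℕ) (A : Set 𝒳) (T : ℕ) (ω : Ω) : ℝ :=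
  (∑ t ∈ Finset.range T, ((TT X M ω) ∩ {t' | X t' ω ∈ A}).indicator (fun _ => (1:ℝ)) t) / T

lemma ff_eq_card (X : ℕ → Ω → 𝒳) (M : ℕ) (A : Set 𝒳) (T : ℕ) (ω : Ω) :
    ff X M A T ω = ((cnt X M A T ω).card : ℝ) / T := by
  classical
  unfold ff
  congr 1
  have hc := @Finset.card_filter ℕ (fun t => t ∈ TT X M ω ∧ X t ω ∈ A)
    (Classical.decPred _) (Finset.range T)
  unfold cnt
  rw [hc]
  push_cast
  refine Finset.sum_congr rfl fun t _ => ?_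
  rw [Set.indicator_apply]
  by_cases h : t ∈ TT X M ω ∧ X t ω ∈ A
  · rw [if_pos h, if_pos (Set.mem_inter h.1 h.2)]
  · rw [if_neg h, if_neg (fun hmem => h ⟨hmem.1, hmem.2⟩)]

lemma ff_nonneg (X : ℕ → Ω → 𝒳) (M : ℕ) (A : Set 𝒳) (T : ℕ) (ω : Ω) :
    0 ≤ ff X M A T ω := by
  rw [ff_eq_card]; positivity

lemma ff_le_one (X : ℕ → Ω → 𝒳) (M : ℕ) (A : Set 𝒳) (T : ℕ) (ω : Ω) :
    ff X M A T ω ≤ 1 := by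
  rw [ff_eq_card]
  apply div_le_one_of_le₀ _ (by positivity)
  have : (cnt X M A T ω).card ≤ T := by
    have h := Finset.card_le_card (s := cnt X M A T ω) (t := Finset.range T)
      (fun t ht => (mem_cnt.1 ht).1 |> Finset.mem_range.2)
    simpa using h
  exact_mod_cast this

lemma cnt_mono_set {X : ℕ → Ω → 𝒳} {M : ℕ} {A A' : Set 𝒳} (h : A ⊆ A') {T : ℕ} {ω : Ω} :
    cnt X M A T ω ⊆ cnt X M A' T ω := fun t ht => by
  rw [mem_cnt] at ht ⊢
  exact ⟨ht.1, ht.2.1, h ht.2.2⟩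

lemma ff_mono (X : ℕ → Ω → 𝒳) (M : ℕ) {A A' : Set 𝒳} (h : A ⊆ A') (T : ℕ) (ω : Ω) :
    ff X M A T ω ≤ ff X M A' T ω := by
  rw [ff_eq_card, ff_eq_card]
  gcongr
  exact cnt_mono_set h

end Stmt2Aux

namespace Stmt2Aux

variable {Ω 𝒳 : Type*} [MeasurableSpace Ω] [MeasurableSpace 𝒳]

section Meas
variable [TopologicalSpace 𝒳] [TopologicalSpace.MetrizableSpace 𝒳]
  [SecondCountableTopology 𝒳] [BorelSpace 𝒳]
variable {X : ℕ → Ω → 𝒳}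

lemma measurableSet_eq_rv (hX : ∀ t, Measurable (X t)) (s t : ℕ) :
    MeasurableSet {ω | X s ω = X t ω} :=
  MeasureTheory.StronglyMeasurable.measurableSet_eq_fun
    (hX s).stronglyMeasurable (hX t).stronglyMeasurable

lemma measurableSet_mem_TT (hX : ∀ t, Measurable (X t)) (M t : ℕ) :
    MeasurableSet {ω | t ∈ TT X M ω} := by
  classical
  have hmeas : Measurable (fun ω =>
      ∑ t' ∈ Finset.range (t+1), (if X t' ω = X t ω then (1:ℝ) else 0)) :=
    Finset.measurable_sum _ (fun t' _ =>
      Measurable.ite (measurableSet_eq_rv hX t' t) measurable_const measurable_const)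
  have hiff : ∀ ω, t ∈ TT X M ω ↔
      (fun ω => ∑ t' ∈ Finset.range (t+1), (if X t' ω = X t ω then (1:ℝ) else 0)) ω
        ≤ (M : ℝ) := by
    intro ω
    have hcard : ((@Finset.filter _ (fun t' => X t' ω = X t ω) (Classical.decPred _)
        (Finset.range (t+1))).card : ℝ)
        = ∑ t' ∈ Finset.range (t+1), (if X t' ω = X t ω then (1:ℝ) else 0) := by
      rw [Finset.card_filter]
      push_cast
      rfl
    show ({t' | t' ≤ t ∧ X t' ω = X t ω}).ncard ≤ M ↔ _
    rw [ncard_dup]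
    simp only [← hcard]
    exact_mod_cast Iff.rfl
  have : {ω | t ∈ TT X M ω} = (fun ω =>
      ∑ t' ∈ Finset.range (t+1), (if X t' ω = X t ω then (1:ℝ) else 0)) ⁻¹'
        (Set.Iic (M : ℝ)) := by
    ext ω
    simp only [Set.mem_setOf_eq, Set.mem_preimage, Set.mem_Iic]
    exact hiff ω
  rw [this]
  exact hmeas measurableSet_Iic

lemma measurable_ff (hX : ∀ t, Measurable (X t)) (M : ℕ) {A : Set 𝒳}
    (hA : MeasurableSet A) (T : ℕ) : Measurable (ff X M A T) := by
  classical
  have hterm : ∀ t : ℕ, Measurable (fun ω =>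
      ((TT X M ω) ∩ {t' | X t' ω ∈ A}).indicator (fun _ => (1:ℝ)) t) := by
    intro t
    have hset : MeasurableSet {ω | t ∈ TT X M ω ∧ X t ω ∈ A} :=
      (measurableSet_mem_TT hX M t).inter (hX t hA)
    have heq : (fun ω => ((TT X M ω) ∩ {t' | X t' ω ∈ A}).indicator (fun _ => (1:ℝ)) t)
        = fun ω => if t ∈ TT X M ω ∧ X t ω ∈ A then (1:ℝ) else 0 := by
      funext ω
      rw [Set.indicator_apply]
      by_cases h : t ∈ TT X M ω ∧ X t ω ∈ A
      · rw [if_pos h, if_pos (Set.mem_inter h.1 h.2)]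
      · rw [if_neg h, if_neg (fun hmem => h ⟨hmem.1, hmem.2⟩)]
    rw [heq]
    exact Measurable.ite hset measurable_const measurable_const
  exact (Finset.measurable_sum _ (fun t _ => hterm t)).div_const _

lemma measurable_limsup_ff (hX : ∀ t, Measurable (X t)) (M : ℕ) {A : Set 𝒳}
    (hA : MeasurableSet A) :
    Measurable (fun ω => Filter.limsup (fun T => ff X M A T ω) atTop) :=
  Measurable.limsup (fun T => measurable_ff hX M hA T)

end Meas

end Stmt2Aux

namespace Stmt2Aux

variable {Ω 𝒳 : Type*} [MeasurableSpace Ω] [MeasurableSpace 𝒳]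

/-- A time in `𝒯^{≤M}` has at most `M` occurrences of its value among `t' ≤ t`;
so fibers of `t ↦ X t ω` on `cnt` have size at most `M`. -/
lemma card_cnt_le_mul_image (X : ℕ → Ω → 𝒳) (M : ℕ) (A : Set 𝒳) (T : ℕ) (ω : Ω) :
    (cnt X M A T ω).card
      ≤ M * (@Finset.image _ _ (Classical.decEq _) (fun t => X t ω) (cnt X M A T ω)).card := by
  classical
  apply Finset.card_le_mul_card_image
  intro v hv
  obtain ⟨t₀, ht₀, hvt₀⟩ := Finset.mem_image.1 hv
  set fib := Finset.filter (fun t => X t ω = v) (cnt X M A T ω) with hfib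
  have hne : fib.Nonempty := ⟨t₀, Finset.mem_filter.2 ⟨ht₀, hvt₀⟩⟩
  set tm := fib.max' hne with htm
  have htm_mem : tm ∈ fib := fib.max'_mem hne
  have htm_cnt : tm ∈ cnt X M A T ω := (Finset.mem_filter.1 htm_mem).1
  have htm_val : X tm ω = v := (Finset.mem_filter.1 htm_mem).2
  have hTT : tm ∈ TT X M ω := (mem_cnt.1 htm_cnt).2.1
  have hdup : ({t' | t' ≤ tm ∧ X t' ω = X tm ω}).ncard ≤ M := hTT
  rw [ncard_dup] at hdup
  refine le_trans (Finset.card_le_card ?_) hdup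
  intro t ht
  have ht' := Finset.mem_filter.1 ht
  have h1 : t ≤ tm := fib.le_max' t ht
  have h2 : X t ω = X tm ω := ht'.2.trans htm_val.symm
  refine Finset.mem_filter.2 ⟨Finset.mem_range.2 (Nat.lt_succ_of_le h1), h2⟩

/-- If the `A k` are pairwise disjoint then the number of sets visited before time `T` is at
most `m` plus the number of `𝒯^{≤1}`-times `t < T` with value in `⋃_{k ≥ m} A k`. -/
lemma visited_le (X : ℕ → Ω → 𝒳) {A : ℕ → Set 𝒳}
    (hdisj : Pairwise (Function.onFun Disjoint A)) (ω : Ω) (T m : ℕ) :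
    ({k | ∃ t < T, X t ω ∈ A k}).ncard
      ≤ m + (cnt X 1 (⋃ j, A (m + j)) T ω).card := by
  classical
  set visited := {k | ∃ t < T, X t ω ∈ A k} with hvis
  set vis' := visited ∩ {k | m ≤ k} with hvis'
  have hwit : ∀ k ∈ vis', ∃ t, t < T ∧ X t ω ∈ A k := by
    intro k hk
    obtain ⟨t, ht, hmem⟩ := hk.1
    exact ⟨t, ht, hmem⟩
  -- the first-hit time of `A k`
  have hτ : ∀ k, k ∈ vis' → ∃ t, t < T ∧ X t ω ∈ A k := hwit
  set τ : ℕ → ℕ := fun k => if h : ∃ t, t < T ∧ X t ω ∈ A k then Nat.find h else 0 with hτdef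
  have hmaps : ∀ k ∈ vis', τ k ∈ (cnt X 1 (⋃ j, A (m + j)) T ω : Finset ℕ) := by
    intro k hk
    have hex : ∃ t, t < T ∧ X t ω ∈ A k := hwit k hk
    have hτk : τ k = Nat.find hex := by rw [hτdef]; exact dif_pos hex
    have hspec := Nat.find_spec hex
    rw [← hτk] at hspec
    refine mem_cnt.2 ⟨hspec.1, ?_, ?_⟩
    · -- τ k is a first occurrence
      show ({t' | t' ≤ τ k ∧ X t' ω = X (τ k) ω}).ncard ≤ 1
      have : {t' | t' ≤ τ k ∧ X t' ω = X (τ k) ω} = {τ k} := by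
        ext t'
        simp only [Set.mem_setOf_eq, Set.mem_singleton_iff]
        constructor
        · rintro ⟨hle, heq⟩
          rcases lt_or_eq_of_le hle with hlt | h
          · exfalso
            have : t' < T ∧ X t' ω ∈ A k := ⟨hlt.trans hspec.1, heq ▸ hspec.2⟩
            rw [hτk] at hlt
            exact Nat.find_min hex hlt this
          · exact h
        · rintro rfl; exact ⟨le_rfl, rfl⟩
      rw [this, Set.ncard_singleton]
    · -- value lies in the union
      have hk' : m ≤ k := hk.2
      refine Set.mem_iUnion.2 ⟨k - m, ?_⟩
      rw [Nat.add_sub_cancel' hk']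
      exact hspec.2
  have hinj : Set.InjOn τ vis' := by
    intro k hk k' hk' heq
    by_contra hne
    have hex := hwit k hk
    have hex' := hwit k' hk'
    have h1 : X (τ k) ω ∈ A k := by
      have : τ k = Nat.find hex := by rw [hτdef]; exact dif_pos hex
      rw [this]; exact (Nat.find_spec hex).2
    have h2 : X (τ k') ω ∈ A k' := by
      have : τ k' = Nat.find hex' := by rw [hτdef]; exact dif_pos hex'
      rw [this]; exact (Nat.find_spec hex').2
    rw [← heq] at h2
    exact Set.disjoint_left.1 (hdisj hne) h1 h2
  have hfin : vis'.Finite := by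
    apply Set.Finite.of_finite_image _ hinj
    exact (cnt X 1 (⋃ j, A (m + j)) T ω).finite_toSet.subset (Set.image_subset_iff.2 hmaps)
  have hcard' : vis'.ncard ≤ (cnt X 1 (⋃ j, A (m + j)) T ω).card := by
    rw [← Set.ncard_coe_finset]
    exact Set.ncard_le_ncard_of_injOn τ hmaps hinj (Finset.finite_toSet _)
  have hsub : visited ⊆ Set.Iio m ∪ vis' := by
    intro k hk
    by_cases h : m ≤ k
    · exact Or.inr ⟨hk, h⟩
    · exact Or.inl (Set.mem_Iio.2 (not_le.1 h))
  calc visited.ncard ≤ (Set.Iio m ∪ vis').ncard :=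
        Set.ncard_le_ncard hsub ((Set.finite_Iio m).union hfin)
    _ ≤ (Set.Iio m).ncard + vis'.ncard := Set.ncard_union_le _ _
    _ ≤ m + (cnt X 1 (⋃ j, A (m + j)) T ω).card := by
        refine add_le_add ?_ hcard'
        have : (Set.Iio m : Set ℕ) = ↑(Finset.range m) := by
          ext x; simp
        rw [this, Set.ncard_coe_finset, Finset.card_range]

end Stmt2Aux

namespace Stmt2Aux

section Main
variable {Ω 𝒳 : Type*} [MeasurableSpace Ω]
    [TopologicalSpace 𝒳] [TopologicalSpace.SeparableSpace 𝒳]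
    [TopologicalSpace.MetrizableSpace 𝒳] [MeasurableSpace 𝒳] [BorelSpace 𝒳]
    (P : Measure Ω) [IsProbabilityMeasure P]
    (X : ℕ → Ω → 𝒳) (hX : ∀ t, Measurable (X t))

include hX in
lemma easy_dir (h1 : ExtCondC1 P X (TT X 1)) : CondC2 P X := by
  letI : MetricSpace 𝒳 := TopologicalSpace.metrizableSpaceMetric 𝒳
  haveI : SecondCountableTopology 𝒳 := UniformSpace.secondCountable_of_separable 𝒳
  intro A hA hdisj
  set B : ℕ → Set 𝒳 := fun m => ⋃ j, A (m + j) with hB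
  have hBmeas : ∀ m, MeasurableSet (B m) := fun m => MeasurableSet.iUnion (fun j => hA _)
  have hBanti : Antitone B := by
    intro m m' hmm' x hx
    obtain ⟨j, hxj⟩ := Set.mem_iUnion.1 hx
    refine Set.mem_iUnion.2 ⟨m' + j - m, ?_⟩
    rw [Nat.add_sub_cancel' (hmm'.trans (Nat.le_add_right _ _))]
    exact hxj
  have hBempty : (⋂ m, B m) = ∅ := by
    ext x
    simp only [Set.mem_iInter, Set.mem_empty_iff_false, iff_false]
    intro hx
    obtain ⟨j0, hj0⟩ := Set.mem_iUnion.1 (hx 0)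
    obtain ⟨j1, hj1⟩ := Set.mem_iUnion.1 (hx (0 + j0 + 1))
    exact Set.disjoint_left.1 (hdisj (show 0 + j0 ≠ 0 + j0 + 1 + j1 by omega)) hj0 hj1
  have hmain : Tendsto (fun m => ∫ ω, limsup (fun T => ff X 1 (B m) T ω) atTop ∂P)
      atTop (𝓝 0) := h1 B hBmeas hBanti hBempty
  set Λ : ℕ → Ω → ℝ := fun m ω => limsup (fun T => ff X 1 (B m) T ω) atTop with hΛdef
  have hΛmeas : ∀ m, Measurable (Λ m) := fun m => measurable_limsup_ff hX 1 (hBmeas m)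
  have hΛ0 : ∀ m ω, 0 ≤ Λ m ω := fun m ω =>
    limsup_nonneg01 (fun T => ff_nonneg X 1 (B m) T ω) (fun T => ff_le_one X 1 (B m) T ω)
  have hΛ1 : ∀ m ω, Λ m ω ≤ 1 := fun m ω =>
    limsup_le_one01 (fun T => ff_nonneg X 1 (B m) T ω) (fun T => ff_le_one X 1 (B m) T ω)
  have hΛanti : ∀ ω, Antitone (fun m => Λ m ω) := by
    intro ω m m' hmm'
    exact limsup_mono01 (fun T => ff_nonneg X 1 (B m') T ω)
      (fun T => ff_le_one X 1 (B m) T ω) (fun T => ff_mono X 1 (hBanti hmm') T ω)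
  have hΛint : ∀ m, Integrable (Λ m) P := by
    intro m
    refine Integrable.mono' (integrable_const (1:ℝ)) (hΛmeas m).aestronglyMeasurable ?_
    exact Eventually.of_forall fun ω => by
      rw [Real.norm_eq_abs, abs_le]; exact ⟨by linarith [hΛ0 m ω], hΛ1 m ω⟩
  set Λ' : Ω → ℝ := fun ω => ⨅ m, Λ m ω with hΛ'def
  have hbdd : ∀ ω, BddBelow (Set.range fun m => Λ m ω) :=
    fun ω => ⟨0, fun x ⟨m, hm⟩ => hm ▸ hΛ0 m ω⟩
  have hΛ'le : ∀ m ω, Λ' ω ≤ Λ m ω := fun m ω => ciInf_le (hbdd ω) m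
  have hΛ'0 : ∀ ω, 0 ≤ Λ' ω := fun ω => le_ciInf (fun m => hΛ0 m ω)
  have hΛ'meas : Measurable Λ' := by
    apply measurable_of_tendsto_metrizable (fun m => hΛmeas m)
    rw [tendsto_pi_nhds]
    exact fun ω => tendsto_atTop_ciInf (hΛanti ω) (hbdd ω)
  have hΛ'int : Integrable Λ' P := by
    refine Integrable.mono' (integrable_const (1:ℝ)) hΛ'meas.aestronglyMeasurable ?_
    exact Eventually.of_forall fun ω => by
      rw [Real.norm_eq_abs, abs_le]
      exact ⟨by linarith [hΛ'0 ω], (hΛ'le 0 ω).trans (hΛ1 0 ω)⟩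
  have hint0 : ∫ ω, Λ' ω ∂P = 0 := by
    have hle0 : ∫ ω, Λ' ω ∂P ≤ 0 := by
      refine ge_of_tendsto hmain (Eventually.of_forall fun m => ?_)
      exact integral_mono hΛ'int (hΛint m) (fun ω => hΛ'le m ω)
    have hge0 : 0 ≤ ∫ ω, Λ' ω ∂P := integral_nonneg hΛ'0
    linarith
  have hae : Λ' =ᵐ[P] 0 := (integral_eq_zero_iff_of_nonneg hΛ'0 hΛ'int).1 hint0
  filter_upwards [hae] with ω hω
  rw [Pi.zero_apply] at hω
  refine tendsto_order.2 ⟨fun b hb => ?_, fun η hη => ?_⟩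
  · refine Eventually.of_forall fun T => lt_of_lt_of_le hb ?_
    positivity
  · -- find m with Λ m ω < η / 2
    have hinf : (⨅ m, Λ m ω) < η / 2 := by
      rw [show (⨅ m, Λ m ω) = 0 from hω]
      linarith
    obtain ⟨m, hm⟩ := exists_lt_of_ciInf_lt hinf
    have hev1 : ∀ᶠ T in atTop, ff X 1 (B m) T ω < η / 2 :=
      eventually_lt_of_limsup_lt hm (bdd_above01 (fun T => ff_le_one X 1 (B m) T ω))
    have hev2 : ∀ᶠ T : ℕ in atTop, (m : ℝ) / T < η / 2 :=
      (tendsto_const_div_atTop_nhds_zero_nat (m : ℝ)).eventually_lt_const (by linarith)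
    filter_upwards [hev1, hev2, eventually_ge_atTop 1] with T h1' h2' h3'
    have hTpos : (0:ℝ) < T := by exact_mod_cast h3'
    have hcount := visited_le X hdisj ω T m
    have hcast : (({k | ∃ t < T, X t ω ∈ A k}).ncard : ℝ)
        ≤ m + ((cnt X 1 (B m) T ω).card : ℝ) := by exact_mod_cast hcount
    calc (({k | ∃ t < T, X t ω ∈ A k}).ncard : ℝ) / T
        ≤ ((m : ℝ) + ((cnt X 1 (B m) T ω).card : ℝ)) / T := by gcongr
      _ = (m : ℝ) / T + ((cnt X 1 (B m) T ω).card : ℝ) / T := add_div _ _ _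
      _ = (m : ℝ) / T + ff X 1 (B m) T ω := by rw [ff_eq_card]
      _ < η / 2 + η / 2 := by exact add_lt_add h2' h1'
      _ = η := by ring

end Main
end Stmt2Aux

namespace Stmt2Aux
section Hard
open scoped ENNReal
variable {Ω 𝒳 : Type*} [MeasurableSpace Ω]
    [TopologicalSpace 𝒳] [TopologicalSpace.SeparableSpace 𝒳]
    [TopologicalSpace.MetrizableSpace 𝒳] [MeasurableSpace 𝒳] [BorelSpace 𝒳]
    (P : Measure Ω) [IsProbabilityMeasure P]
    (X : ℕ → Ω → 𝒳) (hX : ∀ t, Measurable (X t))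

include hX in
lemma hard_dir (h2 : CondC2 P X) (M : ℕ) (hM : 1 ≤ M) : ExtCondC1 P X (TT X M) := by
  letI : MetricSpace 𝒳 := TopologicalSpace.metrizableSpaceMetric 𝒳
  haveI : SecondCountableTopology 𝒳 := UniformSpace.secondCountable_of_separable 𝒳
  have hΩ : Nonempty Ω := by
    by_contra h
    rw [not_nonempty_iff] at h
    have h1 : P Set.univ = 1 := measure_univ
    rw [Set.univ_eq_empty_iff.2 h, measure_empty] at h1
    exact zero_ne_one h1
  haveI h𝒳 : Nonempty 𝒳 := ⟨X 0 (Classical.choice hΩ)⟩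
  intro A hA hAanti hAempty
  set Λ : ℕ → Ω → ℝ := fun k ω => limsup (fun T => ff X M (A k) T ω) atTop with hΛdef
  have hΛmeas : ∀ k, Measurable (Λ k) := fun k => measurable_limsup_ff hX M (hA k)
  have hΛ0 : ∀ k ω, 0 ≤ Λ k ω := fun k ω =>
    limsup_nonneg01 (fun T => ff_nonneg X M (A k) T ω) (fun T => ff_le_one X M (A k) T ω)
  have hΛ1 : ∀ k ω, Λ k ω ≤ 1 := fun k ω =>
    limsup_le_one01 (fun T => ff_nonneg X M (A k) T ω) (fun T => ff_le_one X M (A k) T ω)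
  have hΛanti : ∀ ω, Antitone (fun k => Λ k ω) := by
    intro ω k k' hkk'
    exact limsup_mono01 (fun T => ff_nonneg X M (A k') T ω)
      (fun T => ff_le_one X M (A k) T ω) (fun T => ff_mono X M (hAanti hkk') T ω)
  -- Step 2 : reduce to a.e. convergence
  suffices hae : ∀ᵐ ω ∂P, Tendsto (fun k => Λ k ω) atTop (𝓝 0) by
    have hdom := tendsto_integral_of_dominated_convergence (μ := P) (F := fun k ω => Λ k ω)
      (f := fun _ => (0:ℝ)) (fun _ => (1:ℝ))
      (fun k => (hΛmeas k).aestronglyMeasurable)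
      (integrable_const 1)
      (fun k => Eventually.of_forall fun ω => by
        show ‖Λ k ω‖ ≤ (1:ℝ)
        rw [Real.norm_eq_abs, abs_le]
        exact ⟨by linarith [hΛ0 k ω], hΛ1 k ω⟩)
      hae
    simp only [integral_zero] at hdom
    exact hdom
  -- Step 3 : reduce to null intersection events
  suffices hclaim : ∀ n : ℕ, P (⋂ k, {ω | 1/((n:ℝ)+1) ≤ Λ k ω}) = 0 by
    have hall : ∀ᵐ ω ∂P, ∀ n : ℕ, ω ∉ ⋂ k, {ω | 1/((n:ℝ)+1) ≤ Λ k ω} :=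
      (ae_all_iff).2 fun n => (measure_eq_zero_iff_ae_notMem (μ := P)).1 (hclaim n)
    filter_upwards [hall] with ω hω
    refine tendsto_order.2 ⟨fun b hb => Eventually.of_forall fun k =>
      lt_of_lt_of_le hb (hΛ0 k ω), fun η hη => ?_⟩
    obtain ⟨n, hn⟩ := exists_nat_one_div_lt hη
    have hmem := hω n
    rw [Set.mem_iInter] at hmem
    push_neg at hmem
    obtain ⟨k0, hk0⟩ := hmem
    rw [Set.mem_setOf_eq, not_le] at hk0
    filter_upwards [eventually_ge_atTop k0] with k hk
    exact lt_trans (lt_of_le_of_lt (hΛanti ω hk) hk0) hn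
  intro n
  by_contra hP0
  set ε : ℝ := 1/((n:ℝ)+1) with hεdef
  have hε : 0 < ε := by positivity
  set E : Set Ω := ⋂ k, {ω | ε ≤ Λ k ω} with hEdef
  set δ : ℝ≥0∞ := P E with hδdef
  have hδ0 : δ ≠ 0 := hP0
  have hδtop : δ ≠ ⊤ := measure_ne_top P E
  have hEfreq : ∀ ω ∈ E, ∀ k N, ∃ T, N < T ∧ ε/2 ≤ ff X M (A k) T ω := by
    intro ω hω k N
    exact exists_gt_of_le_limsup (fun T => ff_nonneg X M (A k) T ω) hε
      (Set.mem_iInter.1 hω k) N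
  -- the small bounds
  set b : ℕ → ℝ≥0∞ := fun i => (δ/16) * (2⁻¹)^i with hbdef
  have hb0 : ∀ i, b i ≠ 0 := by
    intro i
    simp only [hbdef]
    apply mul_ne_zero
    · exact (ENNReal.div_pos hδ0 (by norm_num)).ne'
    · exact pow_ne_zero i (by norm_num)
  have hbsum : ∑' i, b i = (δ/16) * 2 := by
    rw [hbdef, ENNReal.tsum_mul_left, ENNReal.tsum_geometric]
    congr 1
    rw [ENNReal.one_sub_inv_two]
    simp
  -- choice of k'
  have hkchoice : ∀ (i Tcur kcur : ℕ), ∃ k', kcur < k' ∧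
      P {ω | ∃ t < Tcur, X t ω ∈ A k'} ≤ b i := by
    intro i Tcur kcur
    have hone : ∀ t : ℕ, Tendsto (fun k => P (X t ⁻¹' A k)) atTop (𝓝 0) := by
      intro t
      have h := tendsto_measure_iInter_atTop (μ := P)
        (fun k => ((hX t) (hA k)).nullMeasurableSet)
        (fun k k' hkk' => Set.preimage_mono (hAanti hkk'))
        ⟨0, measure_ne_top P _⟩
      have hi : ⋂ k, X t ⁻¹' A k = ∅ := by
        rw [← Set.preimage_iInter, hAempty, Set.preimage_empty]
      rw [hi, measure_empty] at h
      exact h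
    have hsum : Tendsto (fun k => ∑ t ∈ Finset.range Tcur, P (X t ⁻¹' A k)) atTop (𝓝 0) := by
      have h := tendsto_finset_sum (Finset.range Tcur) (fun t _ => hone t)
      simpa using h
    have hev : ∀ᶠ k in atTop, (∑ t ∈ Finset.range Tcur, P (X t ⁻¹' A k)) < b i :=
      hsum.eventually_lt_const (pos_iff_ne_zero.2 (hb0 i))
    obtain ⟨k', hk'⟩ := (hev.and (eventually_gt_atTop kcur)).exists
    refine ⟨k', hk'.2, ?_⟩
    have hcover : {ω | ∃ t < Tcur, X t ω ∈ A k'} ⊆ ⋃ t ∈ Finset.range Tcur, X t ⁻¹' A k' := by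
      intro ω hω
      obtain ⟨t, ht, hmem⟩ := hω
      exact Set.mem_biUnion (Finset.mem_range.2 ht) hmem
    calc P {ω | ∃ t < Tcur, X t ω ∈ A k'} ≤ P (⋃ t ∈ Finset.range Tcur, X t ⁻¹' A k') :=
          measure_mono hcover
      _ ≤ ∑ t ∈ Finset.range Tcur, P (X t ⁻¹' A k') := measure_biUnion_finset_le _ _
      _ ≤ b i := hk'.1.le
  -- choice of T'
  have hTchoice : ∀ (i k Tprev : ℕ), ∃ T', Tprev < T' ∧
      P (E \ {ω | ∃ T'', Tprev < T'' ∧ T'' ≤ T' ∧ ε/2 ≤ ff X M (A k) T'' ω}) ≤ b i := by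
    intro i k Tprev
    set G : ℕ → Set Ω := fun N => {ω | ∃ T'', Tprev < T'' ∧ T'' ≤ N ∧ ε/2 ≤ ff X M (A k) T'' ω}
      with hGdef
    have hGN : ∀ N, MeasurableSet (G N) := by
      intro N
      have : G N = ⋃ T'' ∈ Finset.Icc (Tprev+1) N, {ω | ε/2 ≤ ff X M (A k) T'' ω} := by
        ext ω
        simp only [hGdef, Set.mem_setOf_eq, Set.mem_iUnion, Finset.mem_Icc]
        constructor
        · rintro ⟨T'', h1, h2, h3⟩; exact ⟨T'', ⟨h1, h2⟩, h3⟩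
        · rintro ⟨T'', ⟨h1, h2⟩, h3⟩; exact ⟨T'', h1, h2, h3⟩
      rw [this]
      exact MeasurableSet.biUnion (Finset.countable_toSet _)
        (fun T'' _ => measurableSet_le measurable_const (measurable_ff hX M (hA k) T''))
    have hEmeas : MeasurableSet E :=
      MeasurableSet.iInter fun k => measurableSet_le measurable_const (hΛmeas k)
    have hanti : Antitone (fun N => E \ G N) := by
      intro N N' hNN'
      apply Set.diff_subset_diff_right
      rintro ω ⟨T'', h1, h2, h3⟩
      exact ⟨T'', h1, h2.trans hNN', h3⟩
    have hiInt : ⋂ N, (E \ G N) = ∅ := by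
      ext ω
      simp only [Set.mem_iInter, Set.mem_empty_iff_false, iff_false]
      intro hcon
      obtain ⟨T, hT1, hT2⟩ := hEfreq ω (hcon 0).1 k Tprev
      exact (hcon T).2 ⟨T, hT1, le_rfl, hT2⟩
    have htd := tendsto_measure_iInter_atTop (μ := P)
      (fun N => (hEmeas.diff (hGN N)).nullMeasurableSet) hanti ⟨0, measure_ne_top P _⟩
    rw [hiInt, measure_empty] at htd
    have hev : ∀ᶠ N in atTop, P (E \ G N) < b i :=
      htd.eventually_lt_const (pos_iff_ne_zero.2 (hb0 i))
    obtain ⟨T', hT'⟩ := (hev.and (eventually_gt_atTop Tprev)).exists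
    exact ⟨T', hT'.2, hT'.1.le⟩
  -- choice of r
  have hrchoice : ∀ (i T : ℕ), ∃ r : ℕ,
      P {ω | ∃ s < T, ∃ t < T, X s ω ≠ X t ω ∧ dist (X s ω) (X t ω) ≤ 1/((r:ℝ)+1)} ≤ b i := by
    intro i T
    have hpair : ∀ s t : ℕ, Tendsto
        (fun r : ℕ => P {ω | X s ω ≠ X t ω ∧ dist (X s ω) (X t ω) ≤ 1/((r:ℝ)+1)})
        atTop (𝓝 0) := by
      intro s t
      have hm : ∀ r : ℕ,
          MeasurableSet {ω | X s ω ≠ X t ω ∧ dist (X s ω) (X t ω) ≤ 1/((r:ℝ)+1)} := by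
        intro r
        exact ((measurableSet_eq_rv hX s t).compl).inter
          (measurableSet_le ((hX s).dist (hX t)) measurable_const)
      have hanti : Antitone (fun r : ℕ =>
          {ω | X s ω ≠ X t ω ∧ dist (X s ω) (X t ω) ≤ 1/((r:ℝ)+1)}) := by
        intro r r' hrr' ω hω
        refine ⟨hω.1, hω.2.trans ?_⟩
        gcongr
      have hiInt : ⋂ r : ℕ, {ω | X s ω ≠ X t ω ∧ dist (X s ω) (X t ω) ≤ 1/((r:ℝ)+1)} = ∅ := by
        ext ω
        simp only [Set.mem_iInter, Set.mem_setOf_eq, Set.mem_empty_iff_false, iff_false]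
        intro hcon
        have hdle : dist (X s ω) (X t ω) ≤ 0 := by
          refine ge_of_tendsto tendsto_one_div_add_atTop_nhds_zero_nat
            (Eventually.of_forall fun r => (hcon r).2)
        exact (hcon 0).1 (dist_le_zero.1 hdle)
      have htd := tendsto_measure_iInter_atTop (μ := P)
        (fun r => (hm r).nullMeasurableSet) hanti ⟨0, measure_ne_top P _⟩
      rw [hiInt, measure_empty] at htd
      exact htd
    have hsum : Tendsto (fun r : ℕ => ∑ p ∈ Finset.range T ×ˢ Finset.range T,
        P {ω | X p.1 ω ≠ X p.2 ω ∧ dist (X p.1 ω) (X p.2 ω) ≤ 1/((r:ℝ)+1)})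
        atTop (𝓝 0) := by
      have h := tendsto_finset_sum (Finset.range T ×ˢ Finset.range T)
        (fun p _ => hpair p.1 p.2)
      simpa using h
    have hev := hsum.eventually_lt_const (pos_iff_ne_zero.2 (hb0 i))
    obtain ⟨r, hr⟩ := hev.exists
    refine ⟨r, ?_⟩
    have hcover : {ω | ∃ s < T, ∃ t < T, X s ω ≠ X t ω ∧ dist (X s ω) (X t ω) ≤ 1/((r:ℝ)+1)}
        ⊆ ⋃ p ∈ Finset.range T ×ˢ Finset.range T,
          {ω | X p.1 ω ≠ X p.2 ω ∧ dist (X p.1 ω) (X p.2 ω) ≤ 1/((r:ℝ)+1)} := by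
      rintro ω ⟨s, hs, t, ht, h1, h2⟩
      exact Set.mem_biUnion
        (Finset.mem_product.2 ⟨Finset.mem_range.2 hs, Finset.mem_range.2 ht⟩)
        (show ω ∈ {ω | X (s,t).1 ω ≠ X (s,t).2 ω ∧
          dist (X (s,t).1 ω) (X (s,t).2 ω) ≤ 1/((r:ℝ)+1)} from ⟨h1, h2⟩)
    calc P _ ≤ P (⋃ p ∈ Finset.range T ×ˢ Finset.range T,
          {ω | X p.1 ω ≠ X p.2 ω ∧ dist (X p.1 ω) (X p.2 ω) ≤ 1/((r:ℝ)+1)}) :=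
          measure_mono hcover
      _ ≤ ∑ p ∈ Finset.range T ×ˢ Finset.range T,
          P {ω | X p.1 ω ≠ X p.2 ω ∧ dist (X p.1 ω) (X p.2 ω) ≤ 1/((r:ℝ)+1)} :=
          measure_biUnion_finset_le _ _
      _ ≤ b i := hr.le
  -- the recursion
  have step_ex : ∀ (i : ℕ) (p : ℕ × ℕ), ∃ q : ℕ × ℕ, p.1 < q.1 ∧ p.2 < q.2 ∧
      P {ω | ∃ t < p.2, X t ω ∈ A q.1} ≤ b i ∧
      P (E \ {ω | ∃ T'', p.2 < T'' ∧ T'' ≤ q.2 ∧ ε/2 ≤ ff X M (A q.1) T'' ω}) ≤ b i := by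
    intro i p
    obtain ⟨k', hk'1, hk'2⟩ := hkchoice i p.2 p.1
    obtain ⟨T', hT'1, hT'2⟩ := hTchoice i k' p.2
    exact ⟨(k', T'), hk'1, hT'1, hk'2, hT'2⟩
  set seq : ℕ → ℕ × ℕ := fun i => Nat.rec (Classical.choose (step_ex 0 (0,0)))
    (fun i ih => Classical.choose (step_ex (i+1) ih)) i with hseqdef
  set κ : ℕ → ℕ := fun i => (seq i).1 with hκdef
  set τ : ℕ → ℕ := fun i => (seq i).2 with hτdef
  set τp : ℕ → ℕ := fun i => Nat.rec 0 (fun j _ => τ j) i with hτpdef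
  have hspec : ∀ i, κ i < κ (i+1) ∧ τ i < τ (i+1) ∧
      P {ω | ∃ t < τp (i+1), X t ω ∈ A (κ (i+1))} ≤ b (i+1) ∧
      P (E \ {ω | ∃ T'', τp (i+1) < T'' ∧ T'' ≤ τ (i+1) ∧
        ε/2 ≤ ff X M (A (κ (i+1))) T'' ω}) ≤ b (i+1) :=
    fun i => Classical.choose_spec (step_ex (i+1) (seq i))
  have hspec0 : τp 0 < τ 0 ∧
      P {ω | ∃ t < τp 0, X t ω ∈ A (κ 0)} ≤ b 0 ∧
      P (E \ {ω | ∃ T'', τp 0 < T'' ∧ T'' ≤ τ 0 ∧ ε/2 ≤ ff X M (A (κ 0)) T'' ω}) ≤ b 0 := by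
    have h := Classical.choose_spec (step_ex 0 (0,0))
    exact ⟨h.2.1, h.2.2.1, h.2.2.2⟩
  -- uniform versions
  set G : ℕ → Set Ω := fun i =>
    {ω | ∃ T'', τp i < T'' ∧ T'' ≤ τ i ∧ ε/2 ≤ ff X M (A (κ i)) T'' ω} with hGdef
  set H : ℕ → Set Ω := fun i => {ω | ∃ t < τp i, X t ω ∈ A (κ i)} with hHdef
  have hGH : ∀ i, P (E \ G i) ≤ b i ∧ P (H i) ≤ b i := by
    intro i
    cases i with
    | zero => exact ⟨hspec0.2.2, hspec0.2.1⟩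
    | succ j => exact ⟨(hspec j).2.2.2, (hspec j).2.2.1⟩
  -- the r's
  set ρ : ℕ → ℕ := fun i => Classical.choose (hrchoice i (τ i)) with hρdef
  set W : ℕ → Set Ω := fun i => {ω | ∃ s < τ i, ∃ t < τ i, X s ω ≠ X t ω ∧
    dist (X s ω) (X t ω) ≤ 1/((ρ i:ℝ)+1)} with hWdef
  have hWle : ∀ i, P (W i) ≤ b i := fun i => Classical.choose_spec (hrchoice i (τ i))
  -- total bad set
  set U : Set Ω := ⋃ i, ((E \ G i) ∪ (H i ∪ W i)) with hUdef
  have hUle : P U ≤ (δ/16) * 2 * 3 := by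
    calc P U ≤ ∑' i, P ((E \ G i) ∪ (H i ∪ W i)) := measure_iUnion_le _
      _ ≤ ∑' i, (b i + (b i + b i)) := by
          apply ENNReal.tsum_le_tsum
          intro i
          calc P ((E \ G i) ∪ (H i ∪ W i)) ≤ P (E \ G i) + P (H i ∪ W i) := measure_union_le _ _
            _ ≤ P (E \ G i) + (P (H i) + P (W i)) := by
                gcongr
                exact measure_union_le _ _
            _ ≤ b i + (b i + b i) := by
                gcongr
                exacts [(hGH i).1, (hGH i).2, hWle i]
      _ = (∑' i, b i) * 3 := by
          rw [← ENNReal.tsum_mul_right]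
          congr 1
          funext i
          ring
      _ = (δ/16) * 2 * 3 := by rw [hbsum]
  have hUlt : (δ/16) * 2 * 3 < δ := by
    have h6 : (δ/16) * 2 * 3 = δ * (16⁻¹ * 6) := by
      rw [ENNReal.div_eq_inv_mul]
      ring
    rw [h6]
    calc δ * (16⁻¹ * 6) < δ * 1 := by
          rw [ENNReal.mul_lt_mul_iff_right hδ0 hδtop]
          calc (16⁻¹ : ℝ≥0∞) * 6 < 16⁻¹ * 16 := by
                rw [ENNReal.mul_lt_mul_iff_right (by norm_num) (by norm_num)]
                norm_num
            _ = 1 := ENNReal.inv_mul_cancel (by norm_num) (by norm_num)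
      _ = δ := mul_one δ
  have hEU : P (E \ U) ≠ 0 := by
    intro hzero
    have hsplit : P E ≤ P (E \ U) + P U := by
      refine le_trans (measure_mono ?_) (measure_union_le _ _)
      intro ω hω
      by_cases h : ω ∈ U
      · exact Or.inr h
      · exact Or.inl ⟨hω, h⟩
    rw [hzero, zero_add] at hsplit
    exact absurd (lt_of_le_of_lt (hsplit.trans hUle) hUlt) (lt_irrefl δ)
  -- the disjoint family
  set D : ℕ → Set 𝒳 := fun i => A (κ i) \ A (κ (i+1)) with hDdef
  set Bfam : ℕ → Set 𝒳 := fun m => D m.unpair.1 ∩ cell (ρ m.unpair.1) m.unpair.2 with hBfamdef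
  have hκmono : StrictMono κ := strictMono_nat_of_lt_succ (fun i => (hspec i).1)
  have hτmono : StrictMono τ := strictMono_nat_of_lt_succ (fun i => (hspec i).2.1)
  have hDdisj : ∀ i i', i < i' → Disjoint (D i) (D i') := by
    intro i i' h
    refine Set.disjoint_left.2 fun x hx hx' => ?_
    exact hx.2 (hAanti (hκmono.monotone h) hx'.1)
  have hBmeas : ∀ m, MeasurableSet (Bfam m) :=
    fun m => ((hA _).diff (hA _)).inter (cell_measurableSet _ _)
  have hBdisj : Pairwise (Function.onFun Disjoint Bfam) := by
    intro m m' hne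
    unfold Function.onFun
    by_cases hi : m.unpair.1 = m'.unpair.1
    · have hc : m.unpair.2 ≠ m'.unpair.2 := by
        intro hc
        apply hne
        rw [← Nat.pair_unpair m, ← Nat.pair_unpair m', hi, hc]
      refine Disjoint.mono Set.inter_subset_right Set.inter_subset_right ?_
      rw [hi]
      exact cell_disjoint hc
    · rcases Nat.lt_or_ge m.unpair.1 m'.unpair.1 with h | h
      · exact Disjoint.mono Set.inter_subset_left Set.inter_subset_left (hDdisj _ _ h)
      · have h' : m'.unpair.1 < m.unpair.1 := lt_of_le_of_ne h (Ne.symm hi)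
        exact (Disjoint.mono Set.inter_subset_left Set.inter_subset_left (hDdisj _ _ h')).symm
  have hC2 := h2 Bfam hBmeas hBdisj
  -- extract a good ω
  obtain ⟨ω, hωEU, hωtend⟩ : ∃ ω, ω ∈ (E \ U) ∧ Tendsto
      (fun T : ℕ => (({m | ∃ t < T, X t ω ∈ Bfam m}).ncard : ℝ) / T) atTop (𝓝 0) := by
    by_contra hcon
    push_neg at hcon
    have hsub : E \ U ⊆ {ω | ¬ Tendsto
        (fun T : ℕ => (({m | ∃ t < T, X t ω ∈ Bfam m}).ncard : ℝ) / T) atTop (𝓝 0)} :=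
      fun ω hω => hcon ω hω
    have h0 : P {ω | ¬ Tendsto
        (fun T : ℕ => (({m | ∃ t < T, X t ω ∈ Bfam m}).ncard : ℝ) / T) atTop (𝓝 0)} = 0 := hC2
    exact hEU (measure_mono_null hsub h0)
  have hωE : ω ∈ E := hωEU.1
  have hωG : ∀ i, ω ∈ G i := by
    intro i
    by_contra h
    exact hωEU.2 (Set.mem_iUnion.2 ⟨i, Or.inl ⟨hωE, h⟩⟩)
  have hωH : ∀ i, ω ∉ H i := fun i h => hωEU.2 (Set.mem_iUnion.2 ⟨i, Or.inr (Or.inl h)⟩)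
  have hωW : ∀ i, ω ∉ W i := fun i h => hωEU.2 (Set.mem_iUnion.2 ⟨i, Or.inr (Or.inr h)⟩)
  -- final counting contradiction
  set ε₀ : ℝ := ε / (2 * M) with hε₀def
  have hMpos : (0:ℝ) < M := by exact_mod_cast hM
  have hε₀ : 0 < ε₀ := by positivity
  obtain ⟨T₀, hT₀⟩ := eventually_atTop.1 (hωtend.eventually_lt_const hε₀)
  -- block i1 = T₀ + 1
  set i1 := T₀ + 1 with hi1def
  obtain ⟨T, hTa, hTb, hTc⟩ : ∃ T'', τp i1 < T'' ∧ T'' ≤ τ i1 ∧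
      ε/2 ≤ ff X M (A (κ i1)) T'' ω := hωG i1
  have hτpi1 : τp i1 = τ T₀ := rfl
  have hTge : T₀ ≤ T := by
    have h1 : T₀ ≤ τ T₀ := hτmono.le_apply
    rw [hτpi1] at hTa
    omega
  have hTpos : (0:ℝ) < T := by
    have h0 : 0 < T := lt_of_le_of_lt (Nat.zero_le _) hTa
    exact_mod_cast h0
  have hcard : ε/2 * T ≤ ((cnt X M (A (κ i1)) T ω).card : ℝ) := by
    have h := hTc
    rw [ff_eq_card] at h
    exact (le_div_iff₀ hTpos).1 h
  classical
  set F := cnt X M (A (κ i1)) T ω with hFdef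
  set V := @Finset.image _ _ (Classical.decEq _) (fun t => X t ω) F with hVdef
  have hFV : F.card ≤ M * V.card := card_cnt_le_mul_image X M (A (κ i1)) T ω
  have hVmem : ∀ v ∈ V, v ∈ Bfam (Nat.pair i1 (cellIdx (ρ i1) v)) := by
    intro v hv
    obtain ⟨t, htF, rfl⟩ := Finset.mem_image.1 hv
    have htlt : t < T := (mem_cnt.1 htF).1
    have htA : X t ω ∈ A (κ i1) := (mem_cnt.1 htF).2.2
    have htτ : t < τ i1 := lt_of_lt_of_le htlt hTb
    have hnot : X t ω ∉ A (κ (i1+1)) := by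
      intro hmem
      exact hωH (i1+1) ⟨t, htτ, hmem⟩
    show X t ω ∈ Bfam (Nat.pair i1 (cellIdx (ρ i1) (X t ω)))
    rw [hBfamdef]
    simp only [Nat.unpair_pair]
    exact ⟨⟨htA, hnot⟩, mem_cell_cellIdx _ _⟩
  set ψ : 𝒳 → ℕ := fun x => if h : ∃ m, x ∈ Bfam m then h.choose else 0 with hψdef
  have hψeq : ∀ x m, x ∈ Bfam m → ψ x = m := by
    intro x m hm
    have hex : ∃ m', x ∈ Bfam m' := ⟨m, hm⟩
    have hch : x ∈ Bfam hex.choose := hex.choose_spec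
    have hpsi : ψ x = hex.choose := dif_pos hex
    rw [hpsi]
    by_contra hne
    exact Set.disjoint_left.1 (hBdisj hne) hch hm
  have hinj : Set.InjOn ψ ↑V := by
    intro v hv v' hv' heq
    have h1 := hψeq _ _ (hVmem v hv)
    have h2 := hψeq _ _ (hVmem v' hv')
    rw [h1, h2] at heq
    have hcc : cellIdx (ρ i1) v = cellIdx (ρ i1) v' := by
      have hp := Nat.pair_eq_pair.1 heq
      exact hp.2
    obtain ⟨s, hsF, rfl⟩ := Finset.mem_image.1 hv
    obtain ⟨t, htF, rfl⟩ := Finset.mem_image.1 hv'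
    have hs : s < τ i1 := lt_of_lt_of_le (mem_cnt.1 hsF).1 hTb
    have ht : t < τ i1 := lt_of_lt_of_le (mem_cnt.1 htF).1 hTb
    by_contra hne
    apply hωW i1
    refine ⟨s, hs, t, ht, hne, ?_⟩
    have hm1 : X s ω ∈ (cell (ρ i1) (cellIdx (ρ i1) (X s ω)) : Set 𝒳) := mem_cell_cellIdx _ _
    have hm2 : X t ω ∈ (cell (ρ i1) (cellIdx (ρ i1) (X t ω)) : Set 𝒳) := mem_cell_cellIdx _ _
    rw [hcc] at hm1
    exact cell_dist hm1 hm2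
  have himgcard : (V.image ψ).card = V.card := Finset.card_image_of_injOn hinj
  set vis := {m | ∃ t < T, X t ω ∈ Bfam m} with hvisdef
  have hsub : ↑(V.image ψ) ⊆ vis := by
    intro m hm
    obtain ⟨v, hv, rfl⟩ := Finset.mem_image.1 (Finset.mem_coe.1 hm)
    obtain ⟨t, htF, rfl⟩ := Finset.mem_image.1 hv
    have hv' : X t ω ∈ V := Finset.mem_image.2 ⟨t, htF, rfl⟩
    refine ⟨t, (mem_cnt.1 htF).1, ?_⟩
    rw [hψeq _ _ (hVmem _ hv')]
    exact hVmem _ hv'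
  have hfin : vis.Finite := by
    apply Set.Finite.subset ((Finset.range T).image (fun t => ψ (X t ω))).finite_toSet
    rintro m ⟨t, htlt, hmem⟩
    exact Finset.mem_coe.2 (Finset.mem_image.2 ⟨t, Finset.mem_range.2 htlt, hψeq _ _ hmem⟩)
  have hncard : (V.image ψ).card ≤ vis.ncard := by
    rw [← Set.ncard_coe_finset]
    exact Set.ncard_le_ncard hsub hfin
  have hchain : ε₀ * T ≤ (vis.ncard : ℝ) := by
    have h1 : (F.card : ℝ) ≤ (M : ℝ) * V.card := by exact_mod_cast hFV
    have h2 : (V.card : ℝ) ≤ (vis.ncard : ℝ) := by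
      rw [← himgcard]; exact_mod_cast hncard
    have hME : ε₀ * T = (ε/2 * T) / M := by
      rw [hε₀def]; field_simp
    rw [hME]
    calc (ε/2 * T) / M ≤ ((F.card : ℝ)) / M := by gcongr
      _ ≤ ((M:ℝ) * (V.card:ℝ)) / M := by gcongr
      _ = (V.card : ℝ) := mul_div_cancel_left₀ _ hMpos.ne'
      _ ≤ _ := h2
  have hlt := hT₀ T hTge
  rw [div_lt_iff₀ hTpos] at hlt
  linarith

end Hard
end Stmt2Aux


/-- Proposition 2 of the paper: for a process `𝕏`, letting `𝒯^{≤M}` be the set of times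
which are duplicates of index at most `M`, the following are equivalent:
(1) `𝕏 ∈ C2`; (2) `(X_t)_{t ∈ 𝒯^{≤1}}` satisfies extended C1;
(3) for all `M ≥ 1`, `(X_t)_{t ∈ 𝒯^{≤M}}` satisfies extended C1. -/
theorem statement2 {Ω 𝒳 : Type*} [MeasurableSpace Ω]
    [TopologicalSpace 𝒳] [TopologicalSpace.SeparableSpace 𝒳]
    [TopologicalSpace.MetrizableSpace 𝒳] [MeasurableSpace 𝒳] [BorelSpace 𝒳]
    (P : Measure Ω) [IsProbabilityMeasure P]
    (X : ℕ → Ω → 𝒳) (hX : ∀ t, Measurable (X t)) :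
    (CondC2 P X ↔
      ExtCondC1 P X (fun ω => {t | ({t' | t' ≤ t ∧ X t' ω = X t ω}).ncard ≤ 1})) ∧
    (CondC2 P X ↔
      ∀ M : ℕ, 1 ≤ M →
        ExtCondC1 P X (fun ω => {t | ({t' | t' ≤ t ∧ X t' ω = X t ω}).ncard ≤ M})) := by
  constructor
  · constructor
    · intro h
      exact Stmt2Aux.hard_dir P X hX h 1 le_rfl
    · intro h
      exact Stmt2Aux.easy_dir P X hX h
  · constructor
    · intro h M hM
      exact Stmt2Aux.hard_dir P X hX h M hM
    · intro h
      exact Stmt2Aux.easy_dir P X hX (h 1 le_rfl)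
end

section
/- Let 𝒳 be a separable metrizable space with its Borel σ-algebra and let 𝕏 = (X_t)_{t≥1} be a stochastic process on 𝒳 such that almost surely X_t ≠ X_{t'} for all t ≠ t' (the process almost surely never visits the same point twice). Then 𝕏 satisfies condition C1 if and only if 𝕏 satisfies condition C2. -/
open MeasureTheory Filter Topology

namespace Aux1

variable {𝒳 : Type*}

/-- number of times `t < T` with `x t ∈ A`. -/
noncomputable def cnt (x : ℕ → 𝒳) (A : Set 𝒳) (T : ℕ) : ℕ :=
  (@Finset.filter _ (fun t => x t ∈ A) (Classical.decPred _) (Finset.range T)).card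

lemma cnt_le (x : ℕ → 𝒳) (A : Set 𝒳) (T : ℕ) : cnt x A T ≤ T := by
  classical
  have := Finset.card_filter_le (Finset.range T) (fun t => x t ∈ A)
  rw [Finset.card_range] at this
  unfold cnt
  convert this

lemma cnt_mono_set {A B : Set 𝒳} (h : A ⊆ B) (x : ℕ → 𝒳) (T : ℕ) : cnt x A T ≤ cnt x B T := by
  classical
  exact Finset.card_le_card (Finset.monotone_filter_right _ (fun t _ ht => h ht))

lemma cnt_mono_T (x : ℕ → 𝒳) (A : Set 𝒳) {T T' : ℕ} (h : T ≤ T') : cnt x A T ≤ cnt x A T' := by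
  classical
  exact Finset.card_le_card (Finset.monotone_filter_left _ (Finset.range_subset_range.2 h))

lemma cnt_add {A B : Set 𝒳} (hdisj : Disjoint A B) (x : ℕ → 𝒳) (T : ℕ) :
    cnt x (A ∪ B) T = cnt x A T + cnt x B T := by
  classical
  unfold cnt
  rw [← Finset.card_union_of_disjoint]
  · congr 1
    ext t
    simp only [Finset.mem_filter, Finset.mem_union, Set.mem_union]
    tauto
  · rw [Finset.disjoint_filter]
    intro t _ hA hB
    exact Set.disjoint_left.1 hdisj hA hB

/-- freqIn in terms of cnt -/
lemma freqIn_eq (x : ℕ → 𝒳) (A : Set 𝒳) :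
    freqIn x A = limsup (fun T : ℕ => (cnt x A T : ℝ) / T) atTop := by
  classical
  unfold freqIn cnt
  congr 1
  funext T
  congr 2
  simp only [Set.indicator_apply, Finset.sum_boole]

lemma avg_nonneg (x : ℕ → 𝒳) (A : Set 𝒳) (T : ℕ) : 0 ≤ (cnt x A T : ℝ) / T := by
  positivity

lemma avg_le_one (x : ℕ → 𝒳) (A : Set 𝒳) (T : ℕ) : (cnt x A T : ℝ) / T ≤ 1 := by
  rcases Nat.eq_zero_or_pos T with h | h
  · simp [h]
  · rw [div_le_one (by exact_mod_cast h)]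
    exact_mod_cast cnt_le x A T

section limsupTools

variable {u v : ℕ → ℝ}

lemma bddAbove_of_le_one (h1 : ∀ T, u T ≤ 1) : IsBoundedUnder (· ≤ ·) atTop u :=
  isBoundedUnder_of ⟨1, h1⟩

lemma bddBelow_of_nonneg (h0 : ∀ T, 0 ≤ u T) : IsBoundedUnder (· ≥ ·) atTop u :=
  isBoundedUnder_of ⟨0, h0⟩

lemma cobddAbove_of_nonneg (h0 : ∀ T, 0 ≤ u T) : IsCoboundedUnder (· ≤ ·) atTop u :=
  (bddBelow_of_nonneg h0).isCoboundedUnder_le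

lemma cobddBelow_of_le_one (h1 : ∀ T, u T ≤ 1) : IsCoboundedUnder (· ≥ ·) atTop u :=
  (bddAbove_of_le_one h1).isCoboundedUnder_ge

lemma limsup_nonneg (h0 : ∀ T, 0 ≤ u T) (h1 : ∀ T, u T ≤ 1) : 0 ≤ limsup u atTop :=
  le_limsup_of_frequently_le (Frequently.of_forall h0) (bddAbove_of_le_one h1)

lemma limsup_le_one' (h0 : ∀ T, 0 ≤ u T) (h1 : ∀ T, u T ≤ 1) : limsup u atTop ≤ 1 :=
  limsup_le_of_le (cobddAbove_of_nonneg h0) (Eventually.of_forall h1)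

lemma limsup_mono (h : ∀ T, u T ≤ v T) (h0 : ∀ T, 0 ≤ u T) (h1 : ∀ T, v T ≤ 1) :
    limsup u atTop ≤ limsup v atTop :=
  limsup_le_limsup (Eventually.of_forall h) (cobddAbove_of_nonneg h0) (bddAbove_of_le_one h1)

lemma freqIn_nonneg (x : ℕ → 𝒳) (A : Set 𝒳) : 0 ≤ freqIn x A := by
  rw [freqIn_eq]
  exact limsup_nonneg (avg_nonneg x A) (avg_le_one x A)

lemma freqIn_le_one (x : ℕ → 𝒳) (A : Set 𝒳) : freqIn x A ≤ 1 := by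
  rw [freqIn_eq]
  exact limsup_le_one' (avg_nonneg x A) (avg_le_one x A)

lemma freqIn_mono (x : ℕ → 𝒳) {A B : Set 𝒳} (h : A ⊆ B) : freqIn x A ≤ freqIn x B := by
  rw [freqIn_eq, freqIn_eq]
  refine limsup_mono (fun T => ?_) (avg_nonneg x A) (avg_le_one x B)
  rcases Nat.eq_zero_or_pos T with hT | hT
  · simp [hT]
  · rw [div_le_div_iff_of_pos_right (by exact_mod_cast hT)]
    exact_mod_cast cnt_mono_set h x T

/-- limsup (a + v) ≤ limsup v when a → 0 and v in [0,1]. -/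
lemma limsup_add_le_of_tendsto_zero {a : ℕ → ℝ} (ha : Tendsto a atTop (𝓝 0))
    (hv0 : ∀ T, 0 ≤ v T) (hv1 : ∀ T, v T ≤ 1) :
    limsup (fun T => a T + v T) atTop ≤ limsup v atTop := by
  by_contra hcon
  push_neg at hcon
  obtain ⟨c, hc1, hc2⟩ := exists_between hcon
  set ε := (c - limsup v atTop) / 2 with hε
  have hεpos : 0 < ε := by
    have := hc1; simp only [hε]; linarith
  have h1 : ∀ᶠ T in atTop, v T < limsup v atTop + ε := by
    refine eventually_lt_of_limsup_lt ?_ (bddAbove_of_le_one hv1)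
    linarith
  have h2 : ∀ᶠ T in atTop, a T < ε := by
    have := ha.eventually (eventually_lt_nhds hεpos)  -- maybe wrong name
    exact this
  have h3 : ∀ᶠ T in atTop, a T + v T ≤ c := by
    filter_upwards [h1, h2] with T hT1 hT2
    have : limsup v atTop + 2 * ε = c := by simp only [hε]; ring
    nlinarith
  have h4 : limsup (fun T => a T + v T) atTop ≤ c := by
    refine limsup_le_of_le ?_ h3
    have hev : ∀ᶠ T in atTop, (-1:ℝ) ≤ a T + v T := by
      filter_upwards [ha.eventually (eventually_gt_nhds (by norm_num : (-1:ℝ) < 0))] with T hT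
      have := hv0 T
      linarith
    exact isCoboundedUnder_le_of_eventually_le atTop hev
  linarith

end limsupTools
end Aux1

namespace Part2
open Aux1
variable {𝒳 : Type*}

/-- indices visited before time `T`. -/
def vis (x : ℕ → 𝒳) (B : ℕ → Set 𝒳) (T : ℕ) : Set ℕ := {k | ∃ t < T, x t ∈ B k}

section vislemmas

variable {x : ℕ → 𝒳} {B : ℕ → Set 𝒳} {T : ℕ}

private noncomputable def wit (x : ℕ → 𝒳) (B : ℕ → Set 𝒳) (T : ℕ) (k : ℕ) : ℕ :=
  sInf {t | t < T ∧ x t ∈ B k}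

lemma wit_spec {k : ℕ} (hk : k ∈ vis x B T) :
    wit x B T k < T ∧ x (wit x B T k) ∈ B k := by
  obtain ⟨t, ht, hxt⟩ := hk
  exact Nat.sInf_mem (⟨t, ht, hxt⟩ : {t | t < T ∧ x t ∈ B k}.Nonempty)

lemma wit_injOn (hd : Pairwise (Function.onFun Disjoint B)) {s : Set ℕ} (hs : s ⊆ vis x B T) :
    Set.InjOn (wit x B T) s := by
  intro k hk k' hk' he
  by_contra hne
  have h1 := (wit_spec (hs hk)).2
  have h2 := (wit_spec (hs hk')).2
  rw [he] at h1
  exact Set.disjoint_left.1 (hd hne) h1 h2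

lemma vis_finite (hd : Pairwise (Function.onFun Disjoint B)) : (vis x B T).Finite := by
  apply Set.Finite.of_finite_image _ (wit_injOn hd subset_rfl)
  refine Set.Finite.subset (Set.finite_Iio T) ?_
  rintro t ⟨k, hk, rfl⟩
  exact (wit_spec hk).1

lemma ncard_vis_le_T (hd : Pairwise (Function.onFun Disjoint B)) : (vis x B T).ncard ≤ T := by
  rw [← Set.ncard_image_of_injOn (wit_injOn hd subset_rfl)]
  have himg : wit x B T '' vis x B T ⊆ Set.Iio T := by
    rintro t ⟨k, hk, rfl⟩
    exact (wit_spec hk).1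
  calc (wit x B T '' vis x B T).ncard ≤ (Set.Iio T).ncard :=
        Set.ncard_le_ncard himg (Set.finite_Iio T)
    _ = T := by rw [← Finset.coe_range, Set.ncard_coe_finset, Finset.card_range]

/-- VL3: the number of visited sets is at most `k` plus the number of visits to the tail union. -/
lemma ncard_vis_le_tail (hd : Pairwise (Function.onFun Disjoint B)) (k : ℕ) :
    (vis x B T).ncard ≤ k + cnt x (⋃ j, ⋃ (_ : k ≤ j), B j) T := by
  classical
  have hsplit : vis x B T = (vis x B T ∩ Set.Iio k) ∪ (vis x B T ∩ Set.Ici k) := by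
    ext j; simp only [Set.mem_union, Set.mem_inter_iff, Set.mem_Iio, Set.mem_Ici]
    constructor
    · intro h; rcases Nat.lt_or_ge j k with h' | h'
      · exact Or.inl ⟨h, h'⟩
      · exact Or.inr ⟨h, h'⟩
    · tauto
  rw [hsplit]
  refine le_trans (Set.ncard_union_le _ _) (Nat.add_le_add ?_ ?_)
  · calc (vis x B T ∩ Set.Iio k).ncard ≤ (Set.Iio k).ncard :=
          Set.ncard_le_ncard Set.inter_subset_right (Set.finite_Iio k)
      _ = k := by rw [← Finset.coe_range, Set.ncard_coe_finset, Finset.card_range]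
  · set s := vis x B T ∩ Set.Ici k with hs
    have hsub : s ⊆ vis x B T := Set.inter_subset_left
    rw [← Set.ncard_image_of_injOn (wit_injOn hd hsub)]
    have himg : wit x B T '' s ⊆
        ((Finset.range T).filter (fun t => x t ∈ ⋃ j, ⋃ (_ : k ≤ j), B j) : Finset ℕ) := by
      rintro t ⟨j, hj, rfl⟩
      have h1 := wit_spec (hsub hj)
      simp only [Finset.coe_filter, Finset.mem_range, Set.mem_setOf_eq]
      exact ⟨h1.1, Set.mem_iUnion.2 ⟨j, Set.mem_iUnion.2 ⟨hj.2, h1.2⟩⟩⟩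
    calc (wit x B T '' s).ncard
        ≤ _ := Set.ncard_le_ncard himg (Set.finite_coe_iff.mp (by infer_instance))
      _ = cnt x (⋃ j, ⋃ (_ : k ≤ j), B j) T := by
          rw [Set.ncard_coe_finset]; unfold cnt; congr!

/-- VL2: if cells separate points of the trajectory up to time `M ≥ T`, and cover `G`,
then the visit count to `G` is at most the number of visited cells. -/
lemma cnt_le_ncard_vis {C : ℕ → Set 𝒳} {G : Set 𝒳} {M : ℕ} (hTM : T ≤ M)
    (hcov : ∀ y, ∃ j, y ∈ C j)
    (hsep : ∀ j, ∀ t < M, ∀ t' < M, x t ∈ C j → x t' ∈ C j → t = t')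
    (hfin : (vis x (fun j => C j ∩ G) T).Finite) :
    cnt x G T ≤ (vis x (fun j => C j ∩ G) T).ncard := by
  classical
  set g : ℕ → ℕ := fun t => sInf {j | x t ∈ C j} with hg
  have hgmem : ∀ t, x t ∈ C (g t) := fun t => Nat.sInf_mem (hcov (x t))
  set S : Finset ℕ := (Finset.range T).filter (fun t => x t ∈ G) with hS
  have hinj : Set.InjOn g (S : Set ℕ) := by
    intro t ht t' ht' he
    simp only [hS, Finset.coe_filter, Finset.mem_range, Set.mem_setOf_eq] at ht ht'
    exact hsep (g t) t (lt_of_lt_of_le ht.1 hTM) t' (lt_of_lt_of_le ht'.1 hTM)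
      (hgmem t) (he ▸ hgmem t')
  have himg : g '' (S : Set ℕ) ⊆ vis x (fun j => C j ∩ G) T := by
    rintro j ⟨t, ht, rfl⟩
    simp only [hS, Finset.coe_filter, Finset.mem_range, Set.mem_setOf_eq] at ht
    exact ⟨t, ht.1, hgmem t, ht.2⟩
  calc cnt x G T = (S : Set ℕ).ncard := by
        rw [Set.ncard_coe_finset]; unfold cnt; congr!
    _ = (g '' (S : Set ℕ)).ncard := (Set.ncard_image_of_injOn hinj).symm
    _ ≤ _ := Set.ncard_le_ncard himg hfin

end vislemmas

lemma tendsto_zero_of_limsup_nonpos {u : ℕ → ℝ} (h0 : ∀ T, 0 ≤ u T) (h1 : ∀ T, u T ≤ 1)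
    (h : limsup u atTop ≤ 0) : Tendsto u atTop (𝓝 0) := by
  have hbdd := bddAbove_of_le_one h1
  have hbdd' := bddBelow_of_nonneg h0
  have hliminf : 0 ≤ liminf u atTop :=
    le_liminf_of_le (cobddBelow_of_le_one h1) (Eventually.of_forall h0)
  have hls : liminf u atTop ≤ limsup u atTop := liminf_le_limsup hbdd hbdd'
  have h2 : limsup u atTop = 0 := le_antisymm h (le_trans hliminf hls)
  have h3 : liminf u atTop = 0 := le_antisymm (h2 ▸ hls) hliminf
  exact tendsto_of_liminf_eq_limsup h3 h2 hbdd hbdd'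

section meas

variable {Ω : Type*} [MeasurableSpace Ω] [MeasurableSpace 𝒳]
variable {X : ℕ → Ω → 𝒳} {A : Set 𝒳}

lemma cnt_real_eq (x : ℕ → 𝒳) (A : Set 𝒳) (T : ℕ) :
    (cnt x A T : ℝ) = ∑ t ∈ Finset.range T,
      @ite _ (x t ∈ A) (Classical.propDecidable _) (1:ℝ) 0 := by
  classical
  rw [Finset.sum_boole]; unfold cnt; congr!

lemma measurable_cnt_real (hX : ∀ t, Measurable (X t)) (hA : MeasurableSet A) (T : ℕ) :
    Measurable (fun ω => (cnt (fun t => X t ω) A T : ℝ)) := by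
  simp only [cnt_real_eq]
  exact Finset.measurable_sum _
    (fun t _ => Measurable.ite ((hX t) hA) measurable_const measurable_const)

lemma measurable_avg (hX : ∀ t, Measurable (X t)) (hA : MeasurableSet A) (T : ℕ) :
    Measurable (fun ω => (cnt (fun t => X t ω) A T : ℝ) / T) :=
  (measurable_cnt_real hX hA T).div_const _

lemma measurable_freq (hX : ∀ t, Measurable (X t)) (hA : MeasurableSet A) :
    Measurable (fun ω => freqIn (fun t => X t ω) A) := by
  simp only [freqIn_eq]
  exact Measurable.limsup (fun T => measurable_avg hX hA T)

end meas
end Part2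

namespace Dir1
open Aux1 Part2

variable {Ω 𝒳 : Type*} [MeasurableSpace Ω] [MeasurableSpace 𝒳]
variable {P : Measure Ω} [IsProbabilityMeasure P] {X : ℕ → Ω → 𝒳}

lemma integrable_of_bounds {f : Ω → ℝ} (hf : Measurable f) (h0 : ∀ ω, 0 ≤ f ω)
    (h1 : ∀ ω, f ω ≤ 1) : Integrable f P := by
  refine (integrable_const (1:ℝ)).mono' hf.aestronglyMeasurable ?_
  filter_upwards with ω
  rw [Real.norm_eq_abs, abs_le]
  constructor <;> [linarith [h0 ω]; exact h1 ω]

lemma markov {f : Ω → ℝ} (hf : Measurable f) (h0 : ∀ ω, 0 ≤ f ω) (h1 : ∀ ω, f ω ≤ 1)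
    {a : ℝ} (ha : 0 < a) : P {ω | a ≤ f ω} ≤ ENNReal.ofReal ((∫ ω, f ω ∂P) / a) := by
  set s := {ω | a ≤ f ω} with hs
  have hsm : MeasurableSet s := hf measurableSet_Ici
  have hind : ∫ ω, s.indicator (fun _ => a) ω ∂P = (P s).toReal * a := by
    rw [integral_indicator_const _ hsm]; simp [mul_comm, measureReal_def]
  have hmono : ∫ ω, s.indicator (fun _ => a) ω ∂P ≤ ∫ ω, f ω ∂P := by
    refine integral_mono ((integrable_const a).indicator hsm) (integrable_of_bounds hf h0 h1) ?_
    intro ω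
    by_cases hω : ω ∈ s
    · rw [Set.indicator_of_mem hω]; exact hω
    · rw [Set.indicator_of_notMem hω]; exact h0 ω
  have h2 : (P s).toReal ≤ (∫ ω, f ω ∂P) / a := by
    rw [le_div_iff₀ ha]; rw [hind] at hmono; linarith
  calc P s = ENNReal.ofReal ((P s).toReal) := (ENNReal.ofReal_toReal (measure_ne_top P s)).symm
    _ ≤ _ := ENNReal.ofReal_le_ofReal h2

lemma condC2_of_condC1 (hX : ∀ t, Measurable (X t))
    (h1 : ∀ A : ℕ → Set 𝒳, (∀ k, MeasurableSet (A k)) → Antitone A → (⋂ k, A k) = ∅ →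
      Tendsto (fun k => ∫ ω, freqIn (fun t => X t ω) (A k) ∂P) atTop (𝓝 0))
    (A : ℕ → Set 𝒳) (hA : ∀ k, MeasurableSet (A k)) (hd : Pairwise (Function.onFun Disjoint A)) :
    ∀ᵐ ω ∂P, Tendsto
      (fun T : ℕ => (({k | ∃ t < T, X t ω ∈ A k}).ncard : ℝ) / T) atTop (𝓝 0) := by
  set B : ℕ → Set 𝒳 := fun k => ⋃ j, ⋃ (_ : k ≤ j), A j with hB
  have hBmeas : ∀ k, MeasurableSet (B k) :=
    fun k => MeasurableSet.iUnion fun j => MeasurableSet.iUnion fun _ => hA j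
  have hBanti : Antitone B := by
    intro k k' hkk' y hy
    obtain ⟨j, hj, hyj⟩ := Set.mem_iUnion₂.1 hy
    exact Set.mem_iUnion₂.2 ⟨j, le_trans hkk' hj, hyj⟩
  have hBempty : (⋂ k, B k) = ∅ := by
    ext y
    simp only [Set.mem_iInter, Set.mem_empty_iff_false, iff_false, not_forall]
    by_contra hcon
    push_neg at hcon
    obtain ⟨j₀, hj₀, hyj₀⟩ := Set.mem_iUnion₂.1 (hcon 0)
    obtain ⟨j₁, hj₁, hyj₁⟩ := Set.mem_iUnion₂.1 (hcon (j₀ + 1))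
    have : j₀ ≠ j₁ := by omega
    exact Set.disjoint_left.1 (hd this) hyj₀ hyj₁
  have htend := h1 B hBmeas hBanti hBempty
  -- the frequencies
  set f : ℕ → Ω → ℝ := fun k ω => freqIn (fun t => X t ω) (B k) with hf
  have hfmeas : ∀ k, Measurable (f k) := fun k => measurable_freq hX (hBmeas k)
  have hf0 : ∀ k ω, 0 ≤ f k ω := fun k ω => freqIn_nonneg _ _
  have hf1 : ∀ k ω, f k ω ≤ 1 := fun k ω => freqIn_le_one _ _
  -- choose the subsequence
  have hchoice : ∀ m : ℕ, ∃ k, ∫ ω, f k ω ∂P ≤ (1/(m+1)) * (1/2)^m := by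
    intro m
    have hpos : (0:ℝ) < (1/(m+1)) * (1/2)^m := by positivity
    exact (htend.eventually (eventually_le_nhds hpos)).exists
  choose km hkm using hchoice
  set bad : ℕ → Set Ω := fun m => {ω | 1/(m+1) ≤ f (km m) ω} with hbad
  have hbadle : ∀ m, P (bad m) ≤ ENNReal.ofReal ((1/2)^m) := by
    intro m
    refine le_trans (markov (hfmeas (km m)) (hf0 _) (hf1 _) (by positivity)) ?_
    apply ENNReal.ofReal_le_ofReal
    rw [div_le_iff₀ (by positivity)]
    calc ∫ ω, f (km m) ω ∂P ≤ (1/(m+1)) * (1/2)^m := hkm m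
      _ = (1/2)^m * (1/(m+1)) := by ring
  have hsum : (∑' m, P (bad m)) ≠ ⊤ := by
    refine ne_top_of_le_ne_top ?_ (ENNReal.tsum_le_tsum hbadle)
    rw [← ENNReal.ofReal_tsum_of_nonneg (fun m => by positivity)
      (summable_geometric_of_lt_one (by norm_num) (by norm_num))]
    exact ENNReal.ofReal_ne_top
  filter_upwards [ae_eventually_notMem hsum] with ω hω
  -- pathwise argument
  set x : ℕ → 𝒳 := fun t => X t ω with hx
  have hvis : ∀ T, {k | ∃ t < T, X t ω ∈ A k} = vis x A T := fun T => rfl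
  set u : ℕ → ℝ := fun T => ((vis x A T).ncard : ℝ) / T with hu
  have hu0 : ∀ T, 0 ≤ u T := fun T => by positivity
  have hu1 : ∀ T, u T ≤ 1 := by
    intro T
    rcases Nat.eq_zero_or_pos T with h | h
    · simp [hu, h]
    · rw [hu]
      rw [div_le_one (by exact_mod_cast h)]
      exact_mod_cast ncard_vis_le_T hd
  -- limsup u ≤ f k ω for every k
  have hkey : ∀ k, limsup u atTop ≤ f k ω := by
    intro k
    have hptwise : ∀ T, u T ≤ (k:ℝ)/T + (cnt x (B k) T : ℝ)/T := by
      intro T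
      rcases Nat.eq_zero_or_pos T with h | h
      · simp [hu, h]
      · rw [hu, ← add_div, div_le_div_iff_of_pos_right (by exact_mod_cast h)]
        have := ncard_vis_le_tail (x := x) (T := T) hd k
        push_cast
        exact_mod_cast this
    have hstep1 : limsup u atTop ≤ limsup (fun T => (k:ℝ)/T + (cnt x (B k) T : ℝ)/T) atTop := by
      refine limsup_le_limsup (Eventually.of_forall hptwise) (cobddAbove_of_nonneg hu0) ?_
      refine isBoundedUnder_of ⟨(k:ℝ) + 1, fun T => ?_⟩
      have h1 : (k:ℝ)/T ≤ k := by
        rcases Nat.eq_zero_or_pos T with h | h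
        · simp [h]
        · exact div_le_self (Nat.cast_nonneg k) (by exact_mod_cast h)
      have h2 := avg_le_one x (B k) T
      linarith
    have hstep2 : limsup (fun T => (k:ℝ)/T + (cnt x (B k) T : ℝ)/T) atTop ≤ f k ω := by
      have := limsup_add_le_of_tendsto_zero (v := fun T => (cnt x (B k) T : ℝ)/T)
        (tendsto_const_div_atTop_nhds_zero_nat (k:ℝ)) (avg_nonneg x (B k)) (avg_le_one x (B k))
      exact le_of_le_of_eq this (freqIn_eq x (B k)).symm
    exact le_trans hstep1 hstep2
  -- conclude limsup u ≤ 0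
  have hlimsup : limsup u atTop ≤ 0 := by
    refine le_of_forall_pos_le_add (fun ε hε => ?_)
    obtain ⟨N, hN⟩ := eventually_atTop.1 hω
    obtain ⟨m₀, hm₀⟩ := exists_nat_one_div_lt hε
    set m := max N m₀ with hm
    have hωm : ω ∉ bad m := hN m (le_max_left _ _)
    have : f (km m) ω < 1/(m+1) := by
      simp only [hbad, Set.mem_setOf_eq, not_le] at hωm
      exact hωm
    have hle : (1:ℝ)/(m+1) ≤ 1/(m₀+1) := by
      apply div_le_div_of_nonneg_left (by norm_num) (by positivity)
      have : (m₀:ℝ) ≤ m := by exact_mod_cast le_max_right N m₀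
      linarith
    have := hkey (km m)
    push_cast at hm₀ hle ⊢
    linarith
  simp only [hvis]
  exact tendsto_zero_of_limsup_nonpos hu0 hu1 hlimsup

end Dir1

namespace Dir2
open Aux1 Part2

section QCells

variable {𝒳 : Type*} [MetricSpace 𝒳]

/-- disjointified cells of radius 1/(n+1) around a dense sequence. -/
def Q (e : ℕ → 𝒳) (n j : ℕ) : Set 𝒳 :=
  Metric.ball (e j) (1/(n+1)) \ ⋃ (l : ℕ), ⋃ (_ : l < j), Metric.ball (e l) (1/(n+1))

lemma Q_meas [MeasurableSpace 𝒳] [BorelSpace 𝒳] (e : ℕ → 𝒳) (n j : ℕ) :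
    MeasurableSet (Q e n j) :=
  measurableSet_ball.diff (MeasurableSet.iUnion fun l =>
    MeasurableSet.iUnion fun _ => measurableSet_ball)

lemma Q_disj (e : ℕ → 𝒳) (n : ℕ) : Pairwise (Function.onFun Disjoint (Q e n)) := by
  intro j j' hne
  wlog h : j < j' generalizing j j'
  · exact (this hne.symm (by omega)).symm
  refine Set.disjoint_left.2 fun y hy hy' => ?_
  exact hy'.2 (Set.mem_iUnion.2 ⟨j, Set.mem_iUnion.2 ⟨h, hy.1⟩⟩)

lemma Q_cover (e : ℕ → 𝒳) (he : DenseRange e) (n : ℕ) (y : 𝒳) : ∃ j, y ∈ Q e n j := by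
  have hpos : (0:ℝ) < 1/(n+1) := by positivity
  have hne : {j | y ∈ Metric.ball (e j) (1/(n+1))}.Nonempty := by
    obtain ⟨j, hj⟩ := he.exists_dist_lt y hpos
    exact ⟨j, Metric.mem_ball.2 hj⟩
  refine ⟨sInf {j | y ∈ Metric.ball (e j) (1/(n+1))}, Nat.sInf_mem hne, ?_⟩
  intro hy
  obtain ⟨l, hl⟩ := Set.mem_iUnion.1 hy
  obtain ⟨hlt, hmem⟩ := Set.mem_iUnion.1 hl
  exact Nat.notMem_of_lt_sInf hlt hmem

lemma Q_diam (e : ℕ → 𝒳) (n j : ℕ) {y z : 𝒳} (hy : y ∈ Q e n j) (hz : z ∈ Q e n j) :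
    dist y z < 2/(n+1) := by
  have h1 : dist y (e j) < 1/(n+1) := Metric.mem_ball.1 hy.1
  have h2 : dist z (e j) < 1/(n+1) := Metric.mem_ball.1 hz.1
  calc dist y z ≤ dist y (e j) + dist (e j) z := dist_triangle _ _ _
    _ = dist y (e j) + dist z (e j) := by rw [dist_comm (e j) z]
    _ < 1/(n+1) + 1/(n+1) := by linarith
    _ = 2/(n+1) := by ring

end QCells
end Dir2

namespace Dir2b
open Aux1 Part2 Dir2

variable {Ω 𝒳 : Type*} [MeasurableSpace Ω] [MeasurableSpace 𝒳]
variable {P : Measure Ω} [IsProbabilityMeasure P] {X : ℕ → Ω → 𝒳}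

lemma cnt_eq_zero {x : ℕ → 𝒳} {A : Set 𝒳} {T : ℕ} (h : ∀ t < T, x t ∉ A) : cnt x A T = 0 := by
  classical
  unfold cnt
  rw [Finset.card_eq_zero]
  rw [Finset.filter_eq_empty_iff]
  intro t ht
  exact h t (Finset.mem_range.1 ht)

lemma vis_ncard_event_meas (hX : ∀ t, Measurable (X t)) {B : ℕ → Set 𝒳}
    (hB : ∀ k, MeasurableSet (B k)) (hd : Pairwise (Function.onFun Disjoint B)) (T m : ℕ) :
    MeasurableSet {ω | m ≤ (vis (fun t => X t ω) B T).ncard} := by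
  have heq : {ω | m ≤ (vis (fun t => X t ω) B T).ncard}
      = ⋃ (S : Finset ℕ), ⋃ (_ : S.card = m), ⋂ k ∈ S, ⋃ t ∈ Finset.range T, X t ⁻¹' (B k) := by
    ext ω
    simp only [Set.mem_setOf_eq, Set.mem_iUnion, Set.mem_iInter, Set.mem_preimage,
      Finset.mem_range]
    constructor
    · intro hm
      have hfin : (vis (fun t => X t ω) B T).Finite := vis_finite hd
      obtain ⟨S, hSsub, hScard⟩ := Finset.exists_subset_card_eq (s := hfin.toFinset) (n := m)
        (by rwa [← Set.ncard_eq_toFinset_card _ hfin])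
      refine ⟨S, hScard, fun k hk => ?_⟩
      have : k ∈ vis (fun t => X t ω) B T := by
        have := hSsub hk; rwa [Set.Finite.mem_toFinset] at this
      obtain ⟨t, ht, hxt⟩ := this
      exact ⟨t, ht, hxt⟩
    · rintro ⟨S, hScard, hS⟩
      have hsub : (S : Set ℕ) ⊆ vis (fun t => X t ω) B T := by
        intro k hk
        obtain ⟨t, ht, hxt⟩ := hS k hk
        exact ⟨t, ht, hxt⟩
      calc m = S.card := hScard.symm
        _ = (S : Set ℕ).ncard := (Set.ncard_coe_finset S).symm
        _ ≤ _ := Set.ncard_le_ncard hsub (vis_finite hd)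
  rw [heq]
  refine MeasurableSet.iUnion fun S => MeasurableSet.iUnion fun _ => ?_
  exact MeasurableSet.biInter (Set.to_countable _)
    (fun k _ => MeasurableSet.biUnion (Set.to_countable _) (fun t _ => (hX t) (hB k)))

lemma meas_large_of_integral {g : Ω → ℝ} (hg : Measurable g) (h0 : ∀ ω, 0 ≤ g ω)
    (h1 : ∀ ω, g ω ≤ 1) {a b : ℝ} (hb : 0 ≤ b) (hab : a ≤ ∫ ω, g ω ∂P) :
    ENNReal.ofReal (a - b) ≤ P {ω | b ≤ g ω} := by
  set s := {ω | b ≤ g ω} with hs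
  have hsm : MeasurableSet s := hg measurableSet_Ici
  have hpt : ∀ ω, g ω ≤ b + s.indicator (fun _ => (1:ℝ)) ω := by
    intro ω
    by_cases hω : ω ∈ s
    · rw [Set.indicator_of_mem hω]; linarith [h1 ω]
    · rw [Set.indicator_of_notMem hω]
      simp only [hs, Set.mem_setOf_eq, not_le] at hω
      linarith
  have hint : ∫ ω, g ω ∂P ≤ b + (P s).toReal := by
    have h2 : ∫ ω, (b + s.indicator (fun _ => (1:ℝ)) ω) ∂P = b + (P s).toReal := by
      rw [integral_add (integrable_const b) ((integrable_const (1:ℝ)).indicator hsm)]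
      rw [integral_indicator_const _ hsm]
      simp [measureReal_def]
    rw [← h2]
    exact integral_mono (Dir1.integrable_of_bounds hg h0 h1)
      ((integrable_const b).add ((integrable_const (1:ℝ)).indicator hsm)) hpt
  have h3 : a - b ≤ (P s).toReal := by linarith
  calc ENNReal.ofReal (a - b) ≤ ENNReal.ofReal ((P s).toReal) := ENNReal.ofReal_le_ofReal h3
    _ = P s := ENNReal.ofReal_toReal (measure_ne_top P s)

end Dir2b

namespace Dir2c
open Aux1 Part2 Dir2 Dir2b

variable {Ω 𝒳 : Type*} [MeasurableSpace Ω] [MetricSpace 𝒳] [SecondCountableTopology 𝒳]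
  [MeasurableSpace 𝒳] [BorelSpace 𝒳]
variable {P : Measure Ω} [IsProbabilityMeasure P] {X : ℕ → Ω → 𝒳}

lemma step (hX : ∀ t, Measurable (X t))
    (hinj : ∀ᵐ ω ∂P, Function.Injective fun t => X t ω)
    (e : ℕ → 𝒳) (he : DenseRange e)
    {A : ℕ → Set 𝒳} (hA : ∀ k, MeasurableSet (A k)) (hanti : Antitone A)
    (hempty : (⋂ k, A k) = ∅)
    {ε : ℝ} (hε : 0 < ε) {E' : Set Ω} (hE'P : ENNReal.ofReal (ε/2) ≤ P E')
    (i k : ℕ)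
    (hE'prop : ∀ ω ∈ E', ε/2 ≤ freqIn (fun t => X t ω) (A k)) :
    ∃ k' n : ℕ, k < k' ∧ ENNReal.ofReal (ε/8) ≤
      P {ω | ∃ T, i ≤ T ∧ ε/3/2 * T ≤
        ((vis (fun t => X t ω) (fun j => Q e n j ∩ (A k \ A k')) T).ncard : ℝ)} := by
  classical
  set γ : ℝ := ε/3 with hγ
  set δ : ℝ := ε/8 with hδ
  have hγpos : 0 < γ := by positivity
  have hδpos : 0 < δ := by positivity
  set i' : ℕ := max i 1 with hi'
  have hi'pos : 1 ≤ i' := le_max_right i 1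
  -- (1) choose the horizon M
  set F : ℕ → Set Ω := fun T => {ω | γ * T ≤ (cnt (fun t => X t ω) (A k) T : ℝ)} with hF
  set U : ℕ → Set Ω := fun M => ⋃ T ∈ Finset.Icc i' M, F T with hU
  have hUmono : Monotone U := by
    intro M M' hMM' ω hω
    obtain ⟨T, hT, hωT⟩ := Set.mem_iUnion₂.1 hω
    exact Set.mem_iUnion₂.2 ⟨T, Finset.Icc_subset_Icc_right hMM' hT, hωT⟩
  have hcover : E' ⊆ ⋃ M, U M := by
    intro ω hω
    have hfk : ε/2 ≤ freqIn (fun t => X t ω) (A k) := hE'prop ω hω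
    have hfreq : ∃ᶠ T in atTop, γ < (cnt (fun t => X t ω) (A k) T : ℝ)/T := by
      refine frequently_lt_of_lt_limsup
        (cobddAbove_of_nonneg (avg_nonneg (fun t => X t ω) (A k))) ?_
      rw [← freqIn_eq]
      have : γ < ε/2 := by rw [hγ]; linarith
      linarith
    obtain ⟨T, hTi, hT⟩ := (frequently_atTop.1 hfreq) i'
    have hTpos : (0:ℝ) < T := by
      have : (1:ℕ) ≤ T := le_trans hi'pos hTi
      exact_mod_cast this
    refine Set.mem_iUnion.2 ⟨T, Set.mem_iUnion₂.2 ⟨T, Finset.mem_Icc.2 ⟨hTi, le_rfl⟩, ?_⟩⟩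
    show γ * T ≤ (cnt (fun t => X t ω) (A k) T : ℝ)
    rw [← le_div_iff₀ hTpos]
    exact hT.le
  have hUlim : Tendsto (fun M => P (U M)) atTop (𝓝 (P (⋃ M, U M))) :=
    tendsto_measure_iUnion_atTop hUmono
  have h3δlt : ENNReal.ofReal (3*δ) < P (⋃ M, U M) := by
    refine lt_of_lt_of_le ?_ (le_trans hE'P (measure_mono hcover))
    rw [ENNReal.ofReal_lt_ofReal_iff (by positivity)]
    rw [hδ]; linarith
  obtain ⟨M, hM⟩ := (hUlim.eventually (eventually_gt_nhds h3δlt)).exists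
  -- (2) choose k'
  set D : ℕ → Set Ω := fun k' => {ω | γ/2 * i' ≤ (cnt (fun t => X t ω) (A k') M : ℝ)} with hD
  have hDmeas : ∀ k', MeasurableSet (D k') :=
    fun k' => (measurable_cnt_real hX (hA k') M) measurableSet_Ici
  have hDanti : Antitone D := by
    intro a b hab ω hω
    have hω' : γ/2 * i' ≤ (cnt (fun t => X t ω) (A b) M : ℝ) := hω
    show γ/2 * i' ≤ (cnt (fun t => X t ω) (A a) M : ℝ)
    have hc : (cnt (fun t => X t ω) (A b) M : ℝ) ≤ cnt (fun t => X t ω) (A a) M := by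
      exact_mod_cast cnt_mono_set (hanti hab) (fun t => X t ω) M
    linarith
  have hDempty : (⋂ k', D k') = ∅ := by
    ext ω
    simp only [Set.mem_iInter, Set.mem_empty_iff_false, iff_false, not_forall]
    have hesc : ∀ t : ℕ, ∃ j, X t ω ∉ A j := by
      intro t
      have := Set.eq_empty_iff_forall_notMem.1 hempty (X t ω)
      rw [Set.mem_iInter] at this
      push_neg at this
      exact this
    choose jf hjf using hesc
    set k₀ := (Finset.range M).sup jf with hk₀
    refine ⟨k₀, ?_⟩
    have hzero : cnt (fun t => X t ω) (A k₀) M = 0 := by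
      refine cnt_eq_zero (fun t ht hmem => ?_)
      exact hjf t (hanti (Finset.le_sup (Finset.mem_range.2 ht)) hmem)
    simp only [hD, Set.mem_setOf_eq, hzero, Nat.cast_zero, not_le]
    have : (0:ℝ) < i' := by exact_mod_cast lt_of_lt_of_le one_pos hi'pos
    positivity
  have hDlim : Tendsto (fun k' => P (D k')) atTop (𝓝 0) := by
    have := tendsto_measure_iInter_atTop (fun k' => (hDmeas k').nullMeasurableSet) hDanti
      ⟨0, measure_ne_top P _⟩
    rw [hDempty] at this
    simpa [Function.comp_def] using this
  have hδ0 : (0:ENNReal) < ENNReal.ofReal δ := by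
    rw [ENNReal.ofReal_pos]; exact hδpos
  obtain ⟨k', hk'⟩ := ((hDlim.eventually (eventually_le_nhds hδ0)).and
    (eventually_gt_atTop k)).exists
  obtain ⟨hk'2, hk'1⟩ := hk'
  -- (3) choose n
  set S : ℕ → Set Ω := fun n => ⋂ t ∈ Finset.range M, ⋂ t' ∈ Finset.range M,
    {ω | t ≠ t' → 2/(n+1) < dist (X t ω) (X t' ω)} with hS
  have hSmeas : ∀ n, MeasurableSet (S n) := by
    intro n
    refine MeasurableSet.biInter (Set.to_countable _) fun t _ => ?_
    refine MeasurableSet.biInter (Set.to_countable _) fun t' _ => ?_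
    by_cases h : t = t'
    · have : {ω | t ≠ t' → 2/(n+1:ℝ) < dist (X t ω) (X t' ω)} = Set.univ := by
        ext ω; simp [h]
      rw [this]; exact MeasurableSet.univ
    · have : {ω | t ≠ t' → 2/(n+1:ℝ) < dist (X t ω) (X t' ω)}
          = (fun ω => dist (X t ω) (X t' ω)) ⁻¹' (Set.Ioi (2/(n+1))) := by
        ext ω; simp [h]
      rw [this]
      exact ((hX t).dist (hX t')) measurableSet_Ioi
  have hSmono : Monotone S := by
    intro n n' hnn' ω hω
    simp only [hS, Set.mem_iInter, Set.mem_setOf_eq] at hω ⊢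
    intro t ht t' ht' hne
    refine lt_of_le_of_lt ?_ (hω t ht t' ht' hne)
    apply div_le_div_of_nonneg_left (by norm_num) (by positivity)
    have : (n:ℝ) ≤ n' := by exact_mod_cast hnn'
    linarith
  have hScover : ∀ᵐ ω ∂P, ω ∈ ⋃ n, S n := by
    filter_upwards [hinj] with ω hωinj
    set pr : Finset (ℕ × ℕ) :=
      (Finset.range M ×ˢ Finset.range M).filter (fun p => p.1 ≠ p.2) with hpr
    rcases pr.eq_empty_or_nonempty with hemp | hne
    · refine Set.mem_iUnion.2 ⟨0, ?_⟩
      simp only [hS, Set.mem_iInter, Set.mem_setOf_eq]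
      intro t ht t' ht' hne'
      exfalso
      have : (t, t') ∈ pr := by
        simp only [hpr, Finset.mem_filter, Finset.mem_product]
        exact ⟨⟨ht, ht'⟩, hne'⟩
      rw [hemp] at this
      exact absurd this (Finset.notMem_empty _)
    · set D0 := pr.inf' hne (fun p => dist (X p.1 ω) (X p.2 ω)) with hD0
      have hD0pos : 0 < D0 := by
        rw [hD0, Finset.lt_inf'_iff]
        intro p hp
        simp only [hpr, Finset.mem_filter, Finset.mem_product] at hp
        rw [dist_pos]
        exact fun hc => hp.2 (hωinj hc)
      obtain ⟨n, hn⟩ := exists_nat_gt (2/D0)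
      refine Set.mem_iUnion.2 ⟨n, ?_⟩
      simp only [hS, Set.mem_iInter, Set.mem_setOf_eq]
      intro t ht t' ht' hne'
      have hmem : (t, t') ∈ pr := by
        simp only [hpr, Finset.mem_filter, Finset.mem_product]
        exact ⟨⟨ht, ht'⟩, hne'⟩
      have hle : D0 ≤ dist (X t ω) (X t' ω) := Finset.inf'_le _ hmem
      have h2 : 2/(n+1:ℝ) < D0 := by
        rw [div_lt_iff₀ (by positivity)]
        rw [div_lt_iff₀ hD0pos] at hn
        nlinarith
      linarith
  have hScompl : Tendsto (fun n => P ((S n)ᶜ)) atTop (𝓝 0) := by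
    have h1 := tendsto_measure_iInter_atTop
      (fun n => (hSmeas n).compl.nullMeasurableSet)
      (fun a b hab => Set.compl_subset_compl.2 (hSmono hab)) ⟨0, measure_ne_top P _⟩
    have h2 : (⋂ n, (S n)ᶜ) = (⋃ n, S n)ᶜ := (Set.compl_iUnion S).symm
    rw [h2] at h1
    have h3 : P ((⋃ n, S n)ᶜ) = 0 := by
      rw [ae_iff] at hScover
      exact hScover
    rw [h3] at h1
    exact h1
  obtain ⟨n, hn⟩ := (hScompl.eventually (eventually_le_nhds hδ0)).exists
  -- the good event
  refine ⟨k', n, hk'1, ?_⟩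
  set G : Set 𝒳 := A k \ A k' with hG
  set W : Set Ω := U M ∩ (D k')ᶜ ∩ S n with hW
  have hsub : W ⊆ {ω | ∃ T, i ≤ T ∧ γ/2 * T ≤
      ((vis (fun t => X t ω) (fun j => Q e n j ∩ G) T).ncard : ℝ)} := by
    rintro ω ⟨⟨hωU, hωD⟩, hωS⟩
    obtain ⟨T, hTmem, hωF⟩ := Set.mem_iUnion₂.1 hωU
    obtain ⟨hTi', hTM⟩ := Finset.mem_Icc.1 hTmem
    set x : ℕ → 𝒳 := fun t => X t ω with hx
    have hωF' : γ * T ≤ (cnt x (A k) T : ℝ) := hωF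
    have hsplit : cnt x (A k) T = cnt x G T + cnt x (A k') T := by
      have h1 : A k = G ∪ A k' := by
        rw [hG, Set.diff_union_of_subset (hanti hk'1.le)]
      rw [h1, cnt_add Set.disjoint_sdiff_left]
    have hck' : (cnt x (A k') T : ℝ) < γ/2 * i' := by
      have h1 : cnt x (A k') T ≤ cnt x (A k') M := cnt_mono_T x (A k') hTM
      have h2 : ¬ (γ/2 * i' ≤ (cnt x (A k') M : ℝ)) := hωD
      push_neg at h2
      exact lt_of_le_of_lt (by exact_mod_cast h1) h2
    have hi'T : (i' : ℝ) ≤ T := by exact_mod_cast hTi'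
    have hcntG : γ/2 * T ≤ (cnt x G T : ℝ) := by
      have h3 : (cnt x (A k) T : ℝ) = cnt x G T + cnt x (A k') T := by
        exact_mod_cast hsplit
      nlinarith
    have hdisjcell : Pairwise (Function.onFun Disjoint (fun j => Q e n j ∩ G)) :=
      fun a b hab => ((Q_disj e n) hab).mono Set.inter_subset_left Set.inter_subset_left
    have hfin : (vis x (fun j => Q e n j ∩ G) T).Finite := vis_finite hdisjcell
    have hsep : ∀ j, ∀ t < M, ∀ t' < M, x t ∈ Q e n j → x t' ∈ Q e n j → t = t' := by
      intro j t ht t' ht' hxt hxt'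
      by_contra hne
      have hd := Q_diam e n j hxt hxt'
      simp only [hS, Set.mem_iInter, Set.mem_setOf_eq] at hωS
      have := hωS t (Finset.mem_range.2 ht) t' (Finset.mem_range.2 ht') hne
      linarith
    have hvle := cnt_le_ncard_vis hTM (Q_cover e he n) hsep hfin
    refine ⟨T, le_trans (le_max_left i 1) hTi', ?_⟩
    calc γ/2 * T ≤ (cnt x G T : ℝ) := hcntG
      _ ≤ _ := by exact_mod_cast hvle
  have harith : ENNReal.ofReal δ ≤ P W := by
    have hUsub : U M ⊆ W ∪ (D k' ∪ (S n)ᶜ) := by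
      intro ω hω
      by_cases h1 : ω ∈ D k'
      · exact Or.inr (Or.inl h1)
      by_cases h2 : ω ∈ S n
      · exact Or.inl ⟨⟨hω, h1⟩, h2⟩
      · exact Or.inr (Or.inr h2)
    have hchain : P (U M) ≤ P W + ENNReal.ofReal (2*δ) := by
      calc P (U M) ≤ P (W ∪ (D k' ∪ (S n)ᶜ)) := measure_mono hUsub
        _ ≤ P W + P (D k' ∪ (S n)ᶜ) := measure_union_le _ _
        _ ≤ P W + (P (D k') + P ((S n)ᶜ)) := add_le_add_right (measure_union_le _ _) _
        _ ≤ P W + (ENNReal.ofReal δ + ENNReal.ofReal δ) :=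
            add_le_add_right (add_le_add hk'2 hn) _
        _ = P W + ENNReal.ofReal (2*δ) := by
            rw [← ENNReal.ofReal_add hδpos.le hδpos.le]; ring_nf
    have h5 : ENNReal.ofReal (3*δ) ≤ P W + ENNReal.ofReal (2*δ) := le_trans hM.le hchain
    rw [show (δ:ℝ) = 3*δ - 2*δ by ring, ENNReal.ofReal_sub _ (by positivity)]
    exact tsub_le_iff_right.2 h5
  exact le_trans harith (le_trans (measure_mono hsub) (le_of_eq rfl))

end Dir2c

namespace Dir2d
open Aux1 Part2 Dir2 Dir2b Dir2c

variable {Ω 𝒳 : Type*} [MeasurableSpace Ω] [MetricSpace 𝒳] [SecondCountableTopology 𝒳]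
  [MeasurableSpace 𝒳] [BorelSpace 𝒳]
variable {P : Measure Ω} [IsProbabilityMeasure P] {X : ℕ → Ω → 𝒳}

/-- visited cells of a sub-family are at most visited cells of the whole paired family. -/
lemma ncard_vis_pair_le {x : ℕ → 𝒳} {Bfam : ℕ → Set 𝒳}
    (hd : Pairwise (Function.onFun Disjoint Bfam)) {C : ℕ → Set 𝒳} {i : ℕ}
    (hC : ∀ j, C j = Bfam (Nat.pair i j)) (T : ℕ) :
    (vis x C T).ncard ≤ (vis x Bfam T).ncard := by
  have hinj : Set.InjOn (Nat.pair i) (vis x C T) := by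
    intro a _ b _ hab
    exact (Nat.pair_eq_pair.1 hab).2
  rw [← Set.ncard_image_of_injOn hinj]
  refine Set.ncard_le_ncard ?_ (vis_finite hd)
  rintro m ⟨j, ⟨t, ht, hxt⟩, rfl⟩
  exact ⟨t, ht, by rwa [← hC j]⟩

lemma condC1_of_condC2 (hX : ∀ t, Measurable (X t))
    (hinj : ∀ᵐ ω ∂P, Function.Injective fun t => X t ω)
    (e : ℕ → 𝒳) (he : DenseRange e)
    (h2 : ∀ B : ℕ → Set 𝒳, (∀ k, MeasurableSet (B k)) →
      Pairwise (Function.onFun Disjoint B) →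
      ∀ᵐ ω ∂P, Tendsto
        (fun T : ℕ => (({k | ∃ t < T, X t ω ∈ B k}).ncard : ℝ) / T) atTop (𝓝 0))
    (A : ℕ → Set 𝒳) (hA : ∀ k, MeasurableSet (A k)) (hanti : Antitone A)
    (hempty : (⋂ k, A k) = ∅) :
    Tendsto (fun k => ∫ ω, freqIn (fun t => X t ω) (A k) ∂P) atTop (𝓝 0) := by
  classical
  set f : ℕ → Ω → ℝ := fun k ω => freqIn (fun t => X t ω) (A k) with hf
  have hfmeas : ∀ k, Measurable (f k) := fun k => measurable_freq hX (hA k)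
  have hf0 : ∀ k ω, 0 ≤ f k ω := fun k ω => freqIn_nonneg _ _
  have hf1 : ∀ k ω, f k ω ≤ 1 := fun k ω => freqIn_le_one _ _
  have hfint : ∀ k, Integrable (f k) P :=
    fun k => Dir1.integrable_of_bounds (hfmeas k) (hf0 k) (hf1 k)
  have hfanti : ∀ ω, Antitone (fun k => f k ω) :=
    fun ω k k' hkk' => freqIn_mono _ (hanti hkk')
  set s : ℕ → ℝ := fun k => ∫ ω, f k ω ∂P with hs
  have hs_anti : Antitone s :=
    fun k k' hkk' => integral_mono (hfint k') (hfint k) (fun ω => hfanti ω hkk')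
  have hs_nonneg : ∀ k, 0 ≤ s k := fun k => integral_nonneg (hf0 k)
  have hbdd : BddBelow (Set.range s) := by
    refine ⟨0, ?_⟩; rintro _ ⟨k, rfl⟩; exact hs_nonneg k
  have htendsinf : Tendsto s atTop (𝓝 (⨅ k, s k)) := tendsto_atTop_ciInf hs_anti hbdd
  by_contra hcon
  have hinfne : (⨅ k, s k) ≠ 0 := by
    intro h
    exact hcon (by rw [h] at htendsinf; exact htendsinf)
  set ε : ℝ := ⨅ k, s k with hε
  have hεnonneg : 0 ≤ ε := le_ciInf hs_nonneg
  have hεpos : 0 < ε := lt_of_le_of_ne hεnonneg (Ne.symm hinfne)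
  have hεk : ∀ k, ε ≤ s k := fun k => ciInf_le hbdd k
  set γ : ℝ := ε/3 with hγ
  set δ : ℝ := ε/8 with hδ
  have hγpos : 0 < γ := by positivity
  have hδpos : 0 < δ := by positivity
  -- the event E∞
  set E : ℕ → Set Ω := fun k => {ω | ε/2 ≤ f k ω} with hE
  have hEmeas : ∀ k, MeasurableSet (E k) := fun k => (hfmeas k) measurableSet_Ici
  have hEanti : Antitone E := by
    intro a b hab ω hω
    exact le_trans hω (hfanti ω hab)
  have hEk : ∀ k, ENNReal.ofReal (ε/2) ≤ P (E k) := by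
    intro k
    have := meas_large_of_integral (hfmeas k) (hf0 k) (hf1 k) (by positivity : (0:ℝ) ≤ ε/2)
      (hεk k)
    rwa [show ε - ε/2 = ε/2 by ring] at this
  set E' : Set Ω := ⋂ k, E k with hE'
  have hE'P : ENNReal.ofReal (ε/2) ≤ P E' := by
    refine ge_of_tendsto (tendsto_measure_iInter_atTop
      (fun k => (hEmeas k).nullMeasurableSet) hEanti ⟨0, measure_ne_top P _⟩) ?_
    exact Eventually.of_forall hEk
  have hE'prop : ∀ k, ∀ ω ∈ E', ε/2 ≤ freqIn (fun t => X t ω) (A k) :=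
    fun k ω hω => Set.mem_iInter.1 hω k
  -- the recursion
  have hstep : ∀ i k : ℕ, ∃ k' n : ℕ, k < k' ∧ ENNReal.ofReal (ε/8) ≤
      P {ω | ∃ T, i ≤ T ∧ ε/3/2 * T ≤
        ((vis (fun t => X t ω) (fun j => Q e n j ∩ (A k \ A k')) T).ncard : ℝ)} :=
    fun i k => step hX hinj e he hA hanti hempty hεpos hE'P i k (hE'prop k)
  choose kf nf hkf hPf using hstep
  set κ : ℕ → ℕ := fun i => Nat.rec 0 (fun i prev => kf i prev) i with hκ
  have hκsucc : ∀ i, κ (i+1) = kf i (κ i) := fun i => rfl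
  have hκmono : StrictMono κ := strictMono_nat_of_lt_succ (fun i => hkf i (κ i))
  set ν : ℕ → ℕ := fun i => nf i (κ i) with hν
  set G : ℕ → Set 𝒳 := fun i => A (κ i) \ A (κ (i+1)) with hG
  have hPi : ∀ i, ENNReal.ofReal (ε/8) ≤
      P {ω | ∃ T, i ≤ T ∧ ε/3/2 * T ≤
        ((vis (fun t => X t ω) (fun j => Q e (ν i) j ∩ G i) T).ncard : ℝ)} :=
    fun i => hPf i (κ i)
  -- the disjoint family
  set Bfam : ℕ → Set 𝒳 :=
    fun m => Q e (ν (Nat.unpair m).1) (Nat.unpair m).2 ∩ G (Nat.unpair m).1 with hBfam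
  have hBmeas : ∀ m, MeasurableSet (Bfam m) :=
    fun m => (Q_meas e _ _).inter ((hA _).diff (hA _))
  have hGdisj : ∀ i i', i < i' → Disjoint (G i) (G i') := by
    intro i i' hii'
    have h1 : G i' ⊆ A (κ (i+1)) :=
      le_trans Set.diff_subset (hanti (hκmono.monotone hii'))
    have h2 : Disjoint (G i) (A (κ (i+1))) := Set.disjoint_sdiff_left
    exact h2.mono_right h1
  have hBdisj : Pairwise (Function.onFun Disjoint Bfam) := by
    intro m m' hne
    rcases eq_or_ne (Nat.unpair m).1 (Nat.unpair m').1 with h1 | h1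
    · have h2 : (Nat.unpair m).2 ≠ (Nat.unpair m').2 := by
        intro h2
        apply hne
        rw [← Nat.pair_unpair m, ← Nat.pair_unpair m', h1, h2]
      have := (Q_disj e (ν (Nat.unpair m').1)) h2
      refine Function.onFun_apply .. ▸ ?_
      show Disjoint (Bfam m) (Bfam m')
      rw [hBfam]
      simp only [h1]
      exact this.mono Set.inter_subset_left Set.inter_subset_left
    · rcases Nat.lt_or_ge (Nat.unpair m).1 (Nat.unpair m').1 with h | h
      · exact (hGdisj _ _ h).mono Set.inter_subset_right Set.inter_subset_right
      · have h' : (Nat.unpair m').1 < (Nat.unpair m).1 := lt_of_le_of_ne h (Ne.symm h1)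
        exact ((hGdisj _ _ h').mono Set.inter_subset_right Set.inter_subset_right).symm
  have hae := h2 Bfam hBmeas hBdisj
  -- the K sets
  set V : ℕ → Ω → ℕ := fun T ω => (vis (fun t => X t ω) Bfam T).ncard with hV
  set K : ℕ → Set Ω := fun i => {ω | ∀ T, i+1 ≤ T → (V T ω : ℝ) < γ/2 * T} with hK
  have hKmeas : ∀ i, MeasurableSet (K i) := by
    intro i
    have heq : K i = ⋂ (T : ℕ), ⋂ (_ : i+1 ≤ T),
        {ω | ⌈γ/2 * (T:ℝ)⌉₊ ≤ V T ω}ᶜ := by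
      ext ω
      simp only [hK, Set.mem_setOf_eq, Set.mem_iInter, Set.mem_compl_iff]
      constructor
      · intro h T hT
        rw [Nat.ceil_le]
        exact not_le.2 (h T hT)
      · intro h T hT
        have := h T hT
        rw [Nat.ceil_le] at this
        exact not_le.1 this
    rw [heq]
    exact MeasurableSet.iInter fun T => MeasurableSet.iInter fun _ =>
      (vis_ncard_event_meas hX hBmeas hBdisj T _).compl
  have hKmono : Monotone K := by
    intro a b hab ω hω T hT
    exact hω T (le_trans (by omega) hT)
  have hKcover : ∀ᵐ ω ∂P, ω ∈ ⋃ i, K i := by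
    filter_upwards [hae] with ω hω
    have hev : ∀ᶠ T : ℕ in atTop,
        (({k | ∃ t < T, X t ω ∈ Bfam k}).ncard : ℝ)/T < γ/2 :=
      hω.eventually (eventually_lt_nhds (by positivity : (0:ℝ) < γ/2))
    obtain ⟨N, hN⟩ := eventually_atTop.1 hev
    refine Set.mem_iUnion.2 ⟨N, ?_⟩
    intro T hT
    have hTpos : (0:ℝ) < T := by exact_mod_cast (by omega : 0 < T)
    have h4 : (V T ω : ℝ)/T < γ/2 := hN T (by omega)
    rw [div_lt_iff₀ hTpos] at h4
    calc (V T ω : ℝ) < γ/2 * T := by linarith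
      _ = γ/2 * T := rfl
  have hKlim := tendsto_measure_iUnion_atTop (μ := P) hKmono
  have hPK1 : P (⋃ i, K i) = 1 := by
    rw [← prob_compl_eq_zero_iff (MeasurableSet.iUnion hKmeas)]
    exact ae_iff.1 hKcover
  have hKbound : ∀ i, P (K i) + ENNReal.ofReal δ ≤ 1 := by
    intro i
    have hCeq : ∀ j, Q e (ν (i+1)) j ∩ G (i+1) = Bfam (Nat.pair (i+1) j) := by
      intro j
      rw [hBfam]
      simp only [Nat.unpair_pair]
    have hsub2 : {ω | ∃ T, (i+1) ≤ T ∧ ε/3/2 * T ≤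
        ((vis (fun t => X t ω) (fun j => Q e (ν (i+1)) j ∩ G (i+1)) T).ncard : ℝ)}
        ⊆ (K i)ᶜ := by
      rintro ω ⟨T, hT1, hT2⟩
      intro hωK
      have h5 : (vis (fun t => X t ω) (fun j => Q e (ν (i+1)) j ∩ G (i+1)) T).ncard
          ≤ V T ω := ncard_vis_pair_le hBdisj hCeq T
      have h6 := hωK T hT1
      have h7 : ((vis (fun t => X t ω)
          (fun j => Q e (ν (i+1)) j ∩ G (i+1)) T).ncard : ℝ) ≤ V T ω := by
        exact_mod_cast h5
      have h8 : γ/2 * T ≤ ((vis (fun t => X t ω)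
          (fun j => Q e (ν (i+1)) j ∩ G (i+1)) T).ncard : ℝ) := hT2
      linarith
    have h6 : ENNReal.ofReal δ ≤ P ((K i)ᶜ) :=
      le_trans (hPi (i+1)) (measure_mono hsub2)
    calc P (K i) + ENNReal.ofReal δ ≤ P (K i) + P ((K i)ᶜ) := add_le_add_right h6 _
      _ = 1 := by rw [measure_add_measure_compl (hKmeas i), measure_univ]
  have h7 : P (⋃ i, K i) + ENNReal.ofReal δ ≤ 1 :=
    le_of_tendsto (hKlim.add tendsto_const_nhds) (Eventually.of_forall hKbound)
  rw [hPK1] at h7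
  have h8 : (1:ENNReal) < 1 + ENNReal.ofReal δ := by
    refine ENNReal.lt_add_right ENNReal.one_ne_top ?_
    simpa [ENNReal.ofReal_pos] using hδpos
  exact absurd h7 (not_le.2 h8)

end Dir2d

/-- If the process almost surely never visits the same point twice, then it satisfies C1
if and only if it satisfies C2. -/
theorem statement3 {Ω 𝒳 : Type*} [MeasurableSpace Ω]
    [TopologicalSpace 𝒳] [TopologicalSpace.SeparableSpace 𝒳]
    [TopologicalSpace.MetrizableSpace 𝒳] [MeasurableSpace 𝒳] [BorelSpace 𝒳]
    (P : Measure Ω) [IsProbabilityMeasure P]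
    (X : ℕ → Ω → 𝒳) (hX : ∀ t, Measurable (X t))
    (hinj : ∀ᵐ ω ∂P, Function.Injective fun t => X t ω) :
    CondC1 P X ↔ CondC2 P X := by
  constructor
  · intro h1 A hA hd
    exact Dir1.condC2_of_condC1 hX h1 A hA hd
  · intro h2 A hA hanti hempty
    have hΩ : Nonempty Ω := by
      by_contra hne
      have h1 : (Set.univ : Set Ω) = ∅ := by
        rw [Set.univ_eq_empty_iff]
        exact ⟨fun ω => hne ⟨ω⟩⟩
      have h2' : P Set.univ = 1 := measure_univ
      rw [h1, measure_empty] at h2'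
      exact one_ne_zero h2'.symm
    have h𝒳 : Nonempty 𝒳 := ⟨X 0 (Classical.choice hΩ)⟩
    letI : MetricSpace 𝒳 := TopologicalSpace.metrizableSpaceMetric 𝒳
    haveI : SecondCountableTopology 𝒳 := UniformSpace.secondCountable_of_separable 𝒳
    exact Dir2d.condC1_of_condC2 hX hinj (TopologicalSpace.denseSeq 𝒳)
      (TopologicalSpace.denseRange_denseSeq 𝒳) h2 A hA hanti hempty
end

section
/- Let 𝒳 be a measurable space in which every singleton is measurable, and suppose that there exists no non-atomic probability measure on 𝒳, i.e., every probability measure ν on 𝒳 has a point x ∈ 𝒳 with ν({x}) > 0. Then for every probability measure μ on 𝒳, the set S = {x ∈ 𝒳 : μ({x}) > 0} is countable and μ(S) = 1. -/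
open MeasureTheory
open scoped ENNReal

/-- If every singleton of `𝒳` is measurable and there is no non-atomic probability
measure on `𝒳`, then every probability measure `μ` on `𝒳` is supported on the countable
set of its atoms: `S = {x : μ {x} > 0}` is countable and `μ S = 1`. -/
theorem statement7 {𝒳 : Type*} [MeasurableSpace 𝒳]
    (hsing : ∀ x : 𝒳, MeasurableSet ({x} : Set 𝒳))
    (hna : ∀ ν : Measure 𝒳, IsProbabilityMeasure ν → ∃ x : 𝒳, 0 < ν {x})
    (μ : Measure 𝒳) [IsProbabilityMeasure μ] :
    ({x : 𝒳 | 0 < μ {x}}).Countable ∧ μ {x : 𝒳 | 0 < μ {x}} = 1 := by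
  set S := {x : 𝒳 | 0 < μ {x}} with hS
  have hcount : S.Countable := by
    apply Measure.countable_meas_pos_of_disjoint_iUnion (μ := μ)
      (As := fun x : 𝒳 => {x}) (fun x => hsing x)
    intro i j hij
    simpa [Function.onFun] using Set.disjoint_singleton.mpr hij
  refine ⟨hcount, ?_⟩
  have hSm : MeasurableSet S := by
    have : S = ⋃ x ∈ S, {x} := by simp
    rw [this]
    exact MeasurableSet.biUnion hcount fun x _ => hsing x
  by_contra hne
  have hlt : μ S < 1 := lt_of_le_of_ne prob_le_one hne
  have hSc : 0 < μ Sᶜ := by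
    have := prob_compl_eq_one_sub hSm (μ := μ)
    rw [this]
    exact tsub_pos_of_lt hlt
  set c : ℝ≥0∞ := (μ Sᶜ)⁻¹ with hc
  set ν : Measure 𝒳 := c • μ.restrict Sᶜ with hν
  have hνprob : IsProbabilityMeasure ν := by
    constructor
    rw [hν]
    simp only [Measure.smul_apply, smul_eq_mul, Measure.restrict_apply MeasurableSet.univ,
      Set.univ_inter]
    exact ENNReal.inv_mul_cancel hSc.ne' (measure_ne_top _ _)
  obtain ⟨x, hx⟩ := hna ν hνprob
  have : ν {x} = 0 := by
    rw [hν]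
    simp only [Measure.smul_apply, smul_eq_mul, Measure.restrict_apply (hsing x)]
    by_cases hxS : x ∈ S
    · rw [Set.singleton_inter_eq_empty.mpr (by simpa using hxS)]
      simp
    · have : μ {x} = 0 := by
        by_contra h
        exact hxS (pos_iff_ne_zero.mpr h)
      rw [measure_mono_null (Set.inter_subset_left) this]
      simp
  exact hx.ne' this
end

section
/- Let 𝒳 be a measurable space in which every singleton is measurable, and suppose that there exists no non-atomic probability measure on 𝒳, i.e., every probability measure ν on 𝒳 has a point x ∈ 𝒳 with ν({x}) > 0. Then for every sequence (X_t)_{t≥1} of 𝒳-valued random variables on a probability space (Ω, ℱ, P) there exists a countable set S ⊆ 𝒳 such that P[ ∀ t ≥ 1, X_t ∈ S ] = 1. -/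
open MeasureTheory

/-- If every singleton of `𝒳` is measurable and there is no non-atomic probability
measure on `𝒳`, then every stochastic process on `𝒳` almost surely takes values in some
countable set `S ⊆ 𝒳`. -/
theorem statement8 {Ω 𝒳 : Type*} [MeasurableSpace Ω] [MeasurableSpace 𝒳]
    (hsing : ∀ x : 𝒳, MeasurableSet ({x} : Set 𝒳))
    (hna : ∀ ν : Measure 𝒳, IsProbabilityMeasure ν → ∃ x : 𝒳, 0 < ν {x})
    (P : Measure Ω) [IsProbabilityMeasure P]
    (X : ℕ → Ω → 𝒳) (hX : ∀ t, Measurable (X t)) :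
    ∃ S : Set 𝒳, S.Countable ∧ P {ω | ∀ t : ℕ, X t ω ∈ S} = 1 := by
  set ν : ℕ → Measure 𝒳 := fun t => P.map (X t) with hν
  have hprob : ∀ t, IsProbabilityMeasure (ν t) := fun t => Measure.isProbabilityMeasure_map (hX t).aemeasurable
  set A : ℕ → Set 𝒳 := fun t => {x | 0 < ν t {x}} with hA
  have hAc : ∀ t, (A t).Countable := by
    intro t
    have := hprob t
    exact Measure.countable_meas_pos_of_disjoint_iUnion (μ := ν t) (As := fun x : 𝒳 => {x})
      (fun x => hsing x) (fun x y hxy => Set.disjoint_singleton.mpr hxy)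
  have hAm : ∀ t, MeasurableSet (A t) := by
    intro t
    have : A t = ⋃ x ∈ A t, {x} := by simp
    rw [this]
    exact MeasurableSet.biUnion (hAc t) (fun x _ => hsing x)
  -- each A t has full measure under ν t
  have hfull : ∀ t, ν t (A t)ᶜ = 0 := by
    intro t
    by_contra h
    have hc : 0 < ν t (A t)ᶜ := pos_iff_ne_zero.mpr h
    set μ : Measure 𝒳 := (ν t (A t)ᶜ)⁻¹ • (ν t).restrict (A t)ᶜ with hμ
    have := hprob t
    have hfin : ν t (A t)ᶜ ≠ ⊤ := (measure_ne_top _ _)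
    have hμp : IsProbabilityMeasure μ := by
      constructor
      simp [hμ, Measure.restrict_apply_univ, ENNReal.inv_mul_cancel h hfin]
    obtain ⟨x, hx⟩ := hna μ hμp
    have hx' : 0 < (ν t).restrict (A t)ᶜ {x} := by
      by_contra hx0
      push_neg at hx0
      simp only [le_zero_iff] at hx0
      simp [hμ, hx0] at hx
    rw [Measure.restrict_apply (hsing x)] at hx'
    rcases Set.eq_empty_or_nonempty ({x} ∩ (A t)ᶜ) with he | hne
    · rw [he] at hx'; simp at hx'
    · obtain ⟨y, hy1, hy2⟩ := hne
      rw [Set.mem_singleton_iff] at hy1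
      subst hy1
      apply hy2
      exact lt_of_lt_of_le hx' (measure_mono Set.inter_subset_left)
  refine ⟨⋃ t, A t, Set.countable_iUnion hAc, ?_⟩
  have hSm : MeasurableSet (⋃ t, A t) := MeasurableSet.iUnion hAm
  have hbad : P (⋃ t, X t ⁻¹' (⋃ s, A s)ᶜ) = 0 := by
    refine measure_iUnion_null fun t => ?_
    have : ν t (⋃ s, A s)ᶜ = 0 := by
      refine measure_mono_null ?_ (hfull t)
      exact Set.compl_subset_compl.mpr (Set.subset_iUnion A t)
    rw [hν] at this
    rwa [Measure.map_apply (hX t) hSm.compl] at this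
  have : P {ω | ∀ t : ℕ, X t ω ∈ ⋃ s, A s}ᶜ = 0 := by
    convert hbad using 2
    ext ω
    simp [not_forall]
  have hms : MeasurableSet {ω | ∀ t : ℕ, X t ω ∈ ⋃ s, A s} := by
    have : {ω | ∀ t : ℕ, X t ω ∈ ⋃ s, A s} = ⋂ t, X t ⁻¹' (⋃ s, A s) := by
      ext ω; simp [Set.mem_iInter]
    rw [this]
    exact MeasurableSet.iInter fun t => (hX t) hSm
  rwa [prob_compl_eq_zero_iff hms] at this
end
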